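/- arXiv:1908.05057 — 6 statements merged into one kernel-verified Lean document; each statement's English description precedes it below -/
import Mathlib

section
/- Let (h,[.,.]) be a left Leibniz algebra over the reals, F : ℝ → ℝ a function, and P : h^p → ℝ a symmetric multilinear p-form which is invariant, i.e. Σ_{i=1}^p P(x_1,...,[y,x_i],...,x_p) = 0 for all y, x_1,...,x_p. Then the operation x ▷ y := exp(F(P(x,...,x)) ad_x)(y) satisfies the rack self-distributivity x ▷ (y ▷ z) = (x ▷ y) ▷ (x ▷ z). -/
set_option synthInstance.maxHeartbeats 1000000
set_option maxHeartbeats 1000000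

open NormedSpace

section Aux
variable {h : Type*} [NormedAddCommGroup h] [NormedSpace ℝ h] [FiniteDimensional ℝ h]

/-- Any multilinear map on a finite-dimensional real space is continuous. -/
theorem my_multilinear_continuous {p : ℕ} (P : MultilinearMap ℝ (fun _ : Fin p => h) ℝ) :
    Continuous fun m : Fin p → h => P m := by
  classical
  set e := Module.finBasis ℝ h with he
  have expand : ∀ m : Fin p → h,
      P m = ∑ r ∈ Fintype.piFinset
          (fun _ : Fin p => (Finset.univ : Finset (Fin (Module.finrank ℝ h)))),
        (∏ i, e.repr (m i) (r i)) • P (fun i => e (r i)) := by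
    intro m
    calc P m = P (fun i => ∑ k ∈ (Finset.univ : Finset (Fin (Module.finrank ℝ h))),
            e.repr (m i) k • e k) := by
          congr 1; funext i; rw [Module.Basis.sum_repr]
      _ = _ := by
          rw [MultilinearMap.map_sum_finset]
          exact Finset.sum_congr rfl fun r _ => P.map_smul_univ _ _
  have : (fun m : Fin p → h => P m) = fun m => ∑ r ∈ Fintype.piFinset
      (fun _ : Fin p => (Finset.univ : Finset (Fin (Module.finrank ℝ h)))),
      (∏ i, e.repr (m i) (r i)) • P (fun i => e (r i)) := funext expand
  rw [this]
  refine continuous_finset_sum _ fun r _ => Continuous.smul (f := fun m : Fin p → h => ∏ i, e.repr (m i) (r i)) ?_ continuous_const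
  refine continuous_finset_prod _ fun i _ => ?_
  exact ((e.coord (r i)).continuous_of_finiteDimensional).comp (continuous_apply i)

/-- Derivative of a multilinear map along a curve repeated in all slots. -/
theorem my_hasDerivAt_multilinear {p : ℕ} (P : MultilinearMap ℝ (fun _ : Fin p => h) ℝ)
    {u : ℝ → h} {u' : h} {t : ℝ} (hu : HasDerivAt u u' t) :
    HasDerivAt (fun s => P fun _ : Fin p => u s)
      (∑ i : Fin p, P (Function.update (fun _ : Fin p => u t) i u')) t := by
  classical
  let Q : ContinuousMultilinearMap ℝ (fun _ : Fin p => h) ℝ :=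
    ⟨P, my_multilinear_continuous P⟩
  have h1 : HasDerivAt (fun s => (fun _ : Fin p => u s)) (fun _ : Fin p => u') t :=
    hasDerivAt_pi.mpr fun _ => hu
  have h2 := (Q.hasFDerivAt (x := fun _ : Fin p => u t)).comp_hasDerivAt t h1
  have h3 : Q.linearDeriv (fun _ : Fin p => u t) (fun _ : Fin p => u')
      = ∑ i : Fin p, P (Function.update (fun _ : Fin p => u t) i u') := by
    rw [ContinuousMultilinearMap.linearDeriv_apply]
    rfl
  rw [h3] at h2
  exact h2

/-- Derivative of `t ↦ exp(t • M) y`. -/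
theorem my_hasDerivAt_exp_apply (M : h →L[ℝ] h) (y : h) (t : ℝ) :
    HasDerivAt (fun s : ℝ => exp (s • M) y) (M (exp (t • M) y)) t := by
  have : CompleteSpace h := FiniteDimensional.complete ℝ h
  have hd := (hasDerivAt_exp_smul_const' (𝕂 := ℝ) M t).clm_apply (hasDerivAt_const t y)
  simpa using hd

end Aux

/-- The continuous linear endomorphism `ad_x = [x,·]` of a finite-dimensional
left Leibniz algebra. -/
noncomputable def adOp {h : Type*} [NormedAddCommGroup h] [NormedSpace ℝ h]
    [FiniteDimensional ℝ h] (b : h →ₗ[ℝ] h →ₗ[ℝ] h) (x : h) : h →L[ℝ] h :=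
  LinearMap.toContinuousLinearMap (b x)

/-- For a real finite-dimensional left Leibniz algebra `(h,b)`, `F : ℝ → ℝ` and an
invariant symmetric multilinear `p`-form `P`, the operation
`x ▷ y := exp (F (P (x,…,x)) • ad_x) y` is left self-distributive. -/
theorem stmt_3 {h : Type*} [NormedAddCommGroup h] [NormedSpace ℝ h] [FiniteDimensional ℝ h]
    (b : h →ₗ[ℝ] h →ₗ[ℝ] h)
    (leibniz : ∀ u v w : h, b u (b v w) = b (b u v) w + b v (b u w))
    (F : ℝ → ℝ) (p : ℕ) (P : MultilinearMap ℝ (fun _ : Fin p => h) ℝ)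
    (hsymm : ∀ (v : Fin p → h) (σ : Equiv.Perm (Fin p)), P (v ∘ σ) = P v)
    (hinv : ∀ (y : h) (v : Fin p → h), ∑ i, P (Function.update v i (b y (v i))) = 0)
    (op : h → h → h)
    (hop : ∀ x y : h,
      op x y = NormedSpace.exp (F (P fun _ => x) • adOp b x) y) :
    ∀ x y z : h, op x (op y z) = op (op x y) (op x z) := by
  classical
  have hcs : CompleteSpace h := FiniteDimensional.complete ℝ h
  let +nondep : NormedAlgebra ℚ (h →L[ℝ] h) := .restrictScalars ℚ ℝ (h →L[ℝ] h)
  intro x y z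
  set c : h → ℝ := fun w => F (P fun _ => w) with hc
  set M : h →L[ℝ] h := c x • adOp b x with hM
  have hMapp : ∀ w : h, M w = b (c x • x) w := by
    intro w
    simp [hM, adOp, map_smul]
  -- M is a derivation of b
  have hMder : ∀ v w : h, M (b v w) = b (M v) w + b v (M w) := by
    intro v w
    simp only [hMapp, map_smul, LinearMap.smul_apply]
    rw [leibniz, smul_add]
  -- continuous bilinear version of b
  let B₁ : h →ₗ[ℝ] (h →L[ℝ] h) :=
    { toFun := fun v => LinearMap.toContinuousLinearMap (b v)
      map_add' := by intro u v; ext w; simp [map_add]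
      map_smul' := by intro s v; ext w; simp [map_smul] }
  let B : h →L[ℝ] (h →L[ℝ] h) := LinearMap.toContinuousLinearMap B₁
  have hB : ∀ u w : h, B u w = b u w := fun u w => rfl
  -- exp(tM) flow
  set E : ℝ → (h →L[ℝ] h) := fun t => exp (t • M) with hE
  have hEder : ∀ (u : h) (t : ℝ), HasDerivAt (fun s => E s u) (M (E t u)) t :=
    fun u t => my_hasDerivAt_exp_apply M u t
  have hexp10 : exp M * exp (-M) = 1 := by
    rw [← exp_add_of_commute (Commute.neg_right (Commute.refl M)), add_neg_cancel, exp_zero]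
  have hexp01 : exp (-M) * exp M = 1 := by
    rw [← exp_add_of_commute (Commute.neg_left (Commute.refl M)), neg_add_cancel, exp_zero]
  have hcancel : ∀ q : h, exp (-M) (exp M q) = q := by
    intro q
    rw [← ContinuousLinearMap.mul_apply, hexp01, ContinuousLinearMap.one_apply]
  have hcancel' : ∀ q : h, exp M (exp (-M) q) = q := by
    intro q
    rw [← ContinuousLinearMap.mul_apply, hexp10, ContinuousLinearMap.one_apply]
  -- exp M is an automorphism of b
  have aut : ∀ v w : h, exp M (b v w) = b (exp M v) (exp M w) := by
    intro v w
    set φ : ℝ → h := fun t => exp (t • (-M)) (B (E t v) (E t w)) with hφdef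
    have hφ : ∀ t, HasDerivAt φ 0 t := by
      intro t
      have hBv : HasDerivAt (fun s => B (E s v)) (B (M (E t v))) t :=
        B.hasFDerivAt.comp_hasDerivAt t (hEder v t)
      have hinner : HasDerivAt (fun s => B (E s v) (E s w))
          (B (M (E t v)) (E t w) + B (E t v) (M (E t w))) t :=
        hBv.clm_apply (hEder w t)
      have houter := (hasDerivAt_exp_smul_const (𝕂 := ℝ) (-M) t).clm_apply hinner
      have key : (exp (t • (-M)) * (-M)) (B (E t v) (E t w))
          + exp (t • (-M)) (B (M (E t v)) (E t w) + B (E t v) (M (E t w))) = 0 := by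
        rw [ContinuousLinearMap.mul_apply]
        have : B (M (E t v)) (E t w) + B (E t v) (M (E t w)) = M (B (E t v) (E t w)) := by
          rw [hB, hB, hB]
          exact (hMder (E t v) (E t w)).symm
        rw [this]
        simp
      rw [key] at houter
      exact houter
    have hconst : φ 1 = φ 0 :=
      is_const_of_deriv_eq_zero (fun t => (hφ t).differentiableAt)
        (fun t => (hφ t).deriv) 1 0
    have h0 : φ 0 = b v w := by
      simp only [hφdef, hE, zero_smul, exp_zero, ContinuousLinearMap.one_apply]
      exact hB v w
    have h1 : φ 1 = exp (-M) (b (exp M v) (exp M w)) := by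
      simp only [hφdef, hE, one_smul]
      rw [hB]
    rw [h1, h0] at hconst
    calc exp M (b v w) = exp M (exp (-M) (b (exp M v) (exp M w))) := by rw [hconst]
      _ = b (exp M v) (exp M w) := hcancel' _
  -- invariance of P along the flow
  have hPinv : (P fun _ : Fin p => exp M y) = (P fun _ : Fin p => y) := by
    set g : ℝ → ℝ := fun t => P fun _ : Fin p => E t y with hg
    have hgder : ∀ t, HasDerivAt g 0 t := by
      intro t
      have hd := my_hasDerivAt_multilinear P (hEder y t)
      have : (∑ i : Fin p, P (Function.update (fun _ : Fin p => E t y) i (M (E t y)))) = 0 := by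
        have := hinv (c x • x) (fun _ : Fin p => E t y)
        simpa [hMapp] using this
      rw [this] at hd
      exact hd
    have hconst : g 1 = g 0 :=
      is_const_of_deriv_eq_zero (fun t => (hgder t).differentiableAt)
        (fun t => (hgder t).deriv) 1 0
    have h1 : g 1 = P fun _ : Fin p => exp M y := by simp [hg, hE]
    have h0 : g 0 = P fun _ : Fin p => y := by
      simp [hg, hE, exp_zero]
    rw [h1, h0] at hconst
    exact hconst
  -- the unit given by exp M
  set U : (h →L[ℝ] h)ˣ := ⟨exp M, exp (-M), hexp10, hexp01⟩ with hU
  have hUcoe : (U : h →L[ℝ] h) = exp M := rfl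
  have hUinvcoe : ((U⁻¹ : (h →L[ℝ] h)ˣ) : h →L[ℝ] h) = exp (-M) := rfl
  -- conjugation of adOp
  have hconj : adOp b (exp M y) = (U : h →L[ℝ] h) * adOp b y * ((U⁻¹ : (h →L[ℝ] h)ˣ) : h →L[ℝ] h) := by
    ext w
    rw [ContinuousLinearMap.mul_apply, ContinuousLinearMap.mul_apply, hUcoe, hUinvcoe]
    show b (exp M y) w = exp M (b y (exp (-M) w))
    rw [aut y (exp (-M) w), hcancel' w]
  -- put it together
  have hcAy : c (exp M y) = c y := by
    simp only [hc]
    rw [hPinv]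
  have key : exp (c (exp M y) • adOp b (exp M y)) (exp M z)
      = exp M (exp (c y • adOp b y) z) := by
    rw [hcAy, hconj]
    have hsw : c y • ((U : h →L[ℝ] h) * adOp b y * ((U⁻¹ : (h →L[ℝ] h)ˣ) : h →L[ℝ] h))
        = (U : h →L[ℝ] h) * (c y • adOp b y) * ((U⁻¹ : (h →L[ℝ] h)ˣ) : h →L[ℝ] h) := by
      simp only [mul_smul_comm, smul_mul_assoc]
    rw [hsw, exp_units_conj U (c y • adOp b y)]
    rw [ContinuousLinearMap.mul_apply, ContinuousLinearMap.mul_apply, hUinvcoe, hUcoe, hcancel]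
  simp only [hop]
  show exp M (exp (c y • adOp b y) z)
      = exp (c (exp M y) • adOp b (exp M y)) (exp M z)
  exact key.symm
end

section
/- Let h be a left Leibniz algebra and exp(ad_x) the exponential of ad_x. Then for all x, y in h, exp(ad_x) ∘ exp(ad_y) ∘ exp(ad_x)^{-1} = exp(ad_{exp(ad_x)(y)}); consequently x ▷ y := exp(ad_x)(y) defines a rack structure on h (the canonical linear Lie rack structure). -/
set_option maxHeartbeats 1000000
set_option synthInstance.maxHeartbeats 400000

open NormedSpace


section BanachAux

variable {𝔸 : Type*} [NormedRing 𝔸] [NormedAlgebra ℝ 𝔸] [CompleteSpace 𝔸]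

theorem exp_mul_exp_neg' (a : 𝔸) : exp a * exp (-a) = 1 := by
  let +nondep : NormedAlgebra ℚ 𝔸 := .restrictScalars ℚ ℝ 𝔸
  rw [← exp_add_of_commute (Commute.refl a).neg_right, add_neg_cancel, exp_zero]

theorem exp_neg_mul_exp' (a : 𝔸) : exp (-a) * exp a = 1 := by
  let +nondep : NormedAlgebra ℚ 𝔸 := .restrictScalars ℚ ℝ 𝔸
  rw [← exp_add_of_commute (Commute.refl a).neg_left, neg_add_cancel, exp_zero]

theorem exp_conj_aux (u c v : 𝔸) (huv : u * v = 1) (hvu : v * u = 1) :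
    exp (u * c * v) = u * exp c * v :=
  let +nondep : NormedAlgebra ℚ 𝔸 := .restrictScalars ℚ ℝ 𝔸
  exp_units_conj ⟨u, v, huv, hvu⟩ c

/-- Apply a continuous linear map to `exp`. -/
theorem clm_exp_apply {F : Type*} [NormedAddCommGroup F] [NormedSpace ℝ F] [T2Space F]
    (f : 𝔸 →L[ℝ] F) (a : 𝔸) :
    f (exp a) = ∑' n : ℕ, ((n.factorial : ℝ)⁻¹) • f (a ^ n) := by
  rw [exp_eq_tsum ℝ]
  rw [f.map_tsum (expSeries_summable' (𝕂 := ℝ) a)]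
  simp

end BanachAux

section Aux

variable {h : Type*} [NormedAddCommGroup h] [NormedSpace ℝ h] [FiniteDimensional ℝ h]

theorem conj_ad (b : h →ₗ[ℝ] h →ₗ[ℝ] h)
    (leibniz : ∀ u v w : h, b u (b v w) = b (b u v) w + b v (b u w)) (x y : h) :
    exp (adOp b x) * adOp b y * exp (-(adOp b x)) = adOp b (exp (adOp b x) y) := by
  letI : IsTopologicalRing ((h →L[ℝ] h) →L[ℝ] (h →L[ℝ] h)) :=
    @NonUnitalSeminormedRing.toIsTopologicalRing ((h →L[ℝ] h) →L[ℝ] (h →L[ℝ] h)) inferInstance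
  set A := adOp b x with hA
  -- the map `u ↦ adOp b u` as a continuous linear map
  set φ : h →L[ℝ] (h →L[ℝ] h) := LinearMap.toContinuousLinearMap
    ((LinearMap.toContinuousLinearMap :
        (h →ₗ[ℝ] h) ≃ₗ[ℝ] (h →L[ℝ] h)).toLinearMap.comp b) with hφdef
  have hφ : ∀ u : h, φ u = adOp b u := fun u => rfl
  -- left and right multiplication by A on the algebra of endomorphisms
  set L : (h →L[ℝ] h) →L[ℝ] (h →L[ℝ] h) := ContinuousLinearMap.mul ℝ (h →L[ℝ] h) A with hL
  set R : (h →L[ℝ] h) →L[ℝ] (h →L[ℝ] h) :=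
    (ContinuousLinearMap.mul ℝ (h →L[ℝ] h)).flip A with hR
  have hLap : ∀ C : h →L[ℝ] h, L C = A * C := fun _ => rfl
  have hRap : ∀ C : h →L[ℝ] h, R C = C * A := fun _ => rfl
  -- powers of L and -R
  have hLpow : ∀ (n : ℕ) (C : h →L[ℝ] h), (L ^ n) C = A ^ n * C := by
    intro n
    induction n with
    | zero => intro C; simp
    | succ n ih =>
      intro C
      rw [pow_succ, ContinuousLinearMap.mul_apply, hLap, ih, ← mul_assoc, ← pow_succ]
  have hRpow : ∀ (n : ℕ) (C : h →L[ℝ] h), ((-R) ^ n) C = C * (-A) ^ n := by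
    intro n
    induction n with
    | zero => intro C; simp
    | succ n ih =>
      intro C
      rw [pow_succ, ContinuousLinearMap.mul_apply]
      have hnC : (-R) C = C * (-A) := by
        rw [ContinuousLinearMap.neg_apply, hRap, mul_neg]
      rw [hnC, ih, mul_assoc, ← pow_succ']
  -- L and -R commute
  have hcommLR : Commute L R := by
    show L * R = R * L
    ext C
    simp only [ContinuousLinearMap.mul_apply, hLap, hRap, mul_assoc]
  have hcomm : Commute L (-R) := hcommLR.neg_right
  -- exponentials of L and -R act by left/right multiplication
  have hexpL : ∀ C : h →L[ℝ] h, exp L C = exp A * C := by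
    intro C
    have h1 := clm_exp_apply (ContinuousLinearMap.apply ℝ (h →L[ℝ] h) C) L
    have h2 := clm_exp_apply ((ContinuousLinearMap.mul ℝ (h →L[ℝ] h)).flip C) A
    simp only [ContinuousLinearMap.apply_apply, ContinuousLinearMap.flip_apply,
      ContinuousLinearMap.mul_apply'] at h1 h2
    refine Eq.trans h1 (Eq.trans ?_ h2.symm)
    exact tsum_congr fun n => by rw [hLpow]
  have hexpR : ∀ C : h →L[ℝ] h, exp (-R) C = C * exp (-A) := by
    intro C
    have h1 := clm_exp_apply (ContinuousLinearMap.apply ℝ (h →L[ℝ] h) C) (-R)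
    have h2 := clm_exp_apply (ContinuousLinearMap.mul ℝ (h →L[ℝ] h) C) (-A)
    simp only [ContinuousLinearMap.apply_apply, ContinuousLinearMap.mul_apply'] at h1 h2
    refine Eq.trans h1 (Eq.trans ?_ h2.symm)
    exact tsum_congr fun n => by rw [hRpow]
  -- the derivation D = L - R sends φ u to φ (A u)
  have hD : ∀ u : h, (L + -R) (φ u) = φ (A u) := by
    intro u
    ext w
    have hlbz := leibniz x u w
    simp only [ContinuousLinearMap.add_apply, ContinuousLinearMap.neg_apply, hLap, hRap,
      ContinuousLinearMap.mul_apply, hφ, hA, adOp, LinearMap.coe_toContinuousLinearMap'] at *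
    rw [hlbz]
    abel
  have hDpow : ∀ (n : ℕ) (u : h), ((L + -R) ^ n) (φ u) = φ ((A ^ n) u) := by
    intro n
    induction n with
    | zero => intro u; simp
    | succ n ih =>
      intro u
      rw [pow_succ, ContinuousLinearMap.mul_apply, hD, ih]
      congr 1
  -- exp of the derivation sends φ y to φ (exp A y)
  have key : exp (L + -R) (φ y) = φ (exp A y) := by
    have h1 := clm_exp_apply (ContinuousLinearMap.apply ℝ (h →L[ℝ] h) (φ y)) (L + -R)
    have h2 := clm_exp_apply (φ.comp (ContinuousLinearMap.apply ℝ h y)) A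
    simp only [ContinuousLinearMap.apply_apply, ContinuousLinearMap.comp_apply] at h1 h2
    refine Eq.trans h1 (Eq.trans ?_ h2.symm)
    exact tsum_congr fun n => by rw [hDpow]
  -- put everything together
  have hsplit : exp (L + -R) (adOp b y) = exp L (exp (-R) (adOp b y)) := by
    let +nondep : NormedAlgebra ℚ ((h →L[ℝ] h) →L[ℝ] (h →L[ℝ] h)) :=
      .restrictScalars ℚ ℝ _
    have h3 := congrArg (fun T : (h →L[ℝ] h) →L[ℝ] (h →L[ℝ] h) => T (adOp b y))
      (exp_add_of_commute hcomm)
    exact h3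
  rw [mul_assoc, ← hexpR, ← hexpL, ← hsplit]
  exact key

end Aux

/-- For a finite-dimensional real left Leibniz algebra,
`exp (ad_x) ∘ exp (ad_y) ∘ exp (ad_x)⁻¹ = exp (ad_{exp (ad_x) y})` (the inverse of
`exp (ad_x)` being `exp (-ad_x)`); consequently `x ▷ y := exp (ad_x) y` is a rack
operation (the canonical linear Lie rack structure). -/
theorem stmt_5 {h : Type*} [NormedAddCommGroup h] [NormedSpace ℝ h] [FiniteDimensional ℝ h]
    (b : h →ₗ[ℝ] h →ₗ[ℝ] h)
    (leibniz : ∀ u v w : h, b u (b v w) = b (b u v) w + b v (b u w)) :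
    (∀ x y : h,
      NormedSpace.exp (adOp b x) * NormedSpace.exp (adOp b y) *
          NormedSpace.exp (-(adOp b x)) =
        NormedSpace.exp (adOp b (NormedSpace.exp (adOp b x) y))) ∧
    (∀ x : h, Function.Bijective fun y => NormedSpace.exp (adOp b x) y) ∧
    (∀ x y z : h,
      NormedSpace.exp (adOp b x) (NormedSpace.exp (adOp b y) z) =
        NormedSpace.exp (adOp b (NormedSpace.exp (adOp b x) y))
          (NormedSpace.exp (adOp b x) z)) := by
  have key1 : ∀ x y : h,
      exp (adOp b x) * exp (adOp b y) * exp (-(adOp b x)) =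
        exp (adOp b (exp (adOp b x) y)) := by
    intro x y
    have hc := conj_ad b leibniz x y
    have hconj := exp_conj_aux (exp (adOp b x)) (adOp b y) (exp (-(adOp b x)))
      (exp_mul_exp_neg' _) (exp_neg_mul_exp' _)
    rw [hc] at hconj
    exact hconj.symm
  have hinv : ∀ (x : h) (w : h), exp (-(adOp b x)) (exp (adOp b x) w) = w := by
    intro x w
    have := congrArg (fun T : h →L[ℝ] h => T w) (exp_neg_mul_exp' (adOp b x))
    simpa using this
  have hinv' : ∀ (x : h) (w : h), exp (adOp b x) (exp (-(adOp b x)) w) = w := by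
    intro x w
    have := congrArg (fun T : h →L[ℝ] h => T w) (exp_mul_exp_neg' (adOp b x))
    simpa using this
  refine ⟨key1, ?_, ?_⟩
  · intro x
    constructor
    · intro u v huv
      have : exp (-(adOp b x)) (exp (adOp b x) u) =
          exp (-(adOp b x)) (exp (adOp b x) v) := by
        simp only at huv
        rw [huv]
      rwa [hinv, hinv] at this
    · intro z
      exact ⟨exp (-(adOp b x)) z, hinv' x z⟩
  · intro x y z
    have h0 := congrArg (fun T : h →L[ℝ] h => T (exp (adOp b x) z)) (key1 x y).symm
    simp only [ContinuousLinearMap.mul_apply] at h0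
    rw [hinv x z] at h0
    exact h0.symm
end

section
/- Let V be a finite-dimensional real vector space and (A_{n,1})_{n≥1} a sequence of (n+1)-multilinear maps V^{n+1} → V, each symmetric in the first n arguments, such that x ▷ y := y + Σ_{n≥1} A_{n,1}(x,...,x,y) converges. Then ▷ satisfies the self-distributivity x ▷ (y ▷ z) = (x ▷ y) ▷ (x ▷ z) for all x,y,z if and only if for all p,q ≥ 1 and all x,y,z: A_{p,1}(x,A_{q,1}(y,z)) = Σ_{s_1+...+s_q+k=p} A_{q,1}(A_{s_1,1}(x,y),...,A_{s_q,1}(x,y),A_{k,1}(x,z)), where A_{r,1}(x,y) abbreviates A_{r,1}(x,...,x,y), A_{0,1}(x,y):=y, and the sum runs over nonnegative integers s_1,...,s_q,k with s_1+...+s_q+k=p. -/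
/-- `adiag A n x y = A_{n,1}(x,…,x,y)`: the diagonal evaluation of the `n+1`-multilinear
map `A n` on `n` copies of `x` and one `y`. -/
def adiag {V : Type*} [AddCommGroup V] [Module ℝ V]
    (A : (n : ℕ) → MultilinearMap ℝ (fun _ : Fin (n + 1) => V) V)
    (n : ℕ) (x y : V) : V :=
  A n (Fin.snoc (fun _ => x) y)

open Filter Topology Finset

lemma psExt {V : Type*} [NormedAddCommGroup V] [NormedSpace ℝ V] [CompleteSpace V]
    (a b : ℕ → V)
    (ha : ∀ s : ℝ, Summable fun n => s ^ n • a n)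
    (hb : ∀ s : ℝ, Summable fun n => s ^ n • b n)
    (h : ∀ s : ℝ, ∑' n, s ^ n • a n = ∑' n, s ^ n • b n) : a = b := by
  let mk : (ℕ → V) → FormalMultilinearSeries ℝ ℝ V := fun c n =>
    ContinuousMultilinearMap.mkPiRing ℝ (Fin n) (c n)
  have hsum : ∀ (c : ℕ → V), (∀ s : ℝ, Summable fun n => s ^ n • c n) →
      ∀ s : ℝ, (mk c).sum s = ∑' n, s ^ n • c n := by
    intro c _ s
    unfold FormalMultilinearSeries.sum
    refine tsum_congr fun n => ?_
    simp [mk, ContinuousMultilinearMap.mkPiRing_apply]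
  have hF : ∀ (c : ℕ → V), (∀ s : ℝ, Summable fun n => s ^ n • c n) →
      HasFPowerSeriesAt (mk c).sum (mk c) 0 := by
    intro c hc
    have hrad : ∀ r : NNReal, (r : ENNReal) ≤ (mk c).radius := by
      intro r
      refine FormalMultilinearSeries.le_radius_of_tendsto _ (l := 0) ?_
      have h1 : Tendsto (fun n => ‖(r : ℝ) ^ n • c n‖) atTop (𝓝 0) := by
        simpa using (hc r).tendsto_atTop_zero.norm
      refine h1.congr fun n => ?_
      rw [norm_smul, norm_pow, Real.norm_eq_abs, abs_of_nonneg r.coe_nonneg, mul_comm]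
      simp [mk, ContinuousMultilinearMap.norm_mkPiRing]
    have hpos : 0 < (mk c).radius := zero_lt_one.trans_le (by simpa using hrad 1)
    exact ((mk c).hasFPowerSeriesOnBall hpos).hasFPowerSeriesAt
  have h1 := hF a ha
  have h2 := hF b hb
  have hfun : (mk a).sum = (mk b).sum := by
    funext s
    rw [hsum a ha s, hsum b hb s, h s]
  rw [hfun] at h1
  have := h1.eq_formalMultilinearSeries h2
  funext n
  have hn := congrFun this n
  have := congrArg (fun (M : ContinuousMultilinearMap ℝ (fun _ : Fin n => ℝ) V) =>
    M fun _ => (1 : ℝ)) hn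
  simpa [mk, ContinuousMultilinearMap.mkPiRing_apply] using this


/-- A multilinear map on a finite-dimensional real normed space is continuous. -/
lemma mlCont {V W : Type*} [NormedAddCommGroup V] [NormedSpace ℝ V] [FiniteDimensional ℝ V]
    [NormedAddCommGroup W] [NormedSpace ℝ W] {ι : Type*} [Fintype ι]
    (f : MultilinearMap ℝ (fun _ : ι => V) W) : Continuous f := by
  classical
  set b := Module.finBasis ℝ V with hb
  have key : ∀ m : ι → V,
      f m = ∑ t : ι → Fin (Module.finrank ℝ V),
        (∏ i, b.equivFunL (m i) (t i)) • f fun i => b (t i) := by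
    intro m
    have hm : m = fun i => ∑ j, b.equivFunL (m i) j • b j := by
      funext i
      exact (b.sum_equivFun (m i)).symm
    conv_lhs => rw [hm]
    rw [f.map_sum]
    exact Finset.sum_congr rfl fun t _ => by rw [f.map_smul_univ]
  have : (⇑f) = fun m : ι → V => ∑ t : ι → Fin (Module.finrank ℝ V),
      (∏ i, b.equivFunL (m i) (t i)) • f fun i => b (t i) := funext key
  rw [this]
  refine continuous_finset_sum _ fun t _ => Continuous.smul ?_ continuous_const
  refine continuous_finset_prod _ fun i _ => ?_
  exact (continuous_apply (t i)).comp (b.equivFunL.continuous.comp (continuous_apply i))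


lemma summable_pi_prod : ∀ (n : ℕ) (u : Fin n → ℕ → ℝ), (∀ i j, 0 ≤ u i j) →
    (∀ i, Summable (u i)) → Summable fun t : Fin n → ℕ => ∏ i, u i (t i) := by
  intro n
  induction n with
  | zero =>
    intro u _ _
    exact Summable.of_finite
  | succ n ih =>
    intro u hpos hsum
    have hrest := ih (fun i => u i.succ) (fun i j => hpos _ _) fun i => hsum _
    have key := (hsum 0).mul_of_nonneg hrest (fun j => hpos 0 j)
      (fun t => Finset.prod_nonneg fun i _ => hpos _ _)
    refine ((Fin.consEquiv fun _ : Fin (n + 1) => ℕ).summable_iff).1 (key.congr fun x => ?_)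
    simp [Fin.prod_univ_succ]

lemma mlHasSum {V : Type*} [NormedAddCommGroup V] [NormedSpace ℝ V] [FiniteDimensional ℝ V]
    {k : ℕ} (M : ContinuousMultilinearMap ℝ (fun _ : Fin k => V) V) (f : Fin k → ℕ → V)
    (hf : ∀ i, Summable (f i)) :
    HasSum (fun t : Fin k → ℕ => M fun i => f i (t i)) (M fun i => ∑' j, f i j) := by
  classical
  have hnorm : ∀ i, Summable fun j => ‖f i j‖ := fun i => summable_norm_iff.2 (hf i)
  have hprod : Summable fun t : Fin k → ℕ => ∏ i, ‖f i (t i)‖ :=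
    summable_pi_prod k (fun i j => ‖f i j‖) (fun i j => norm_nonneg _) hnorm
  have hS : Summable fun t : Fin k → ℕ => M fun i => f i (t i) := by
    refine summable_norm_iff.1 (Summable.of_nonneg_of_le (fun t => norm_nonneg _)
      (fun t => ?_) (hprod.mul_left ‖M‖))
    exact M.le_opNorm _
  set box : ℕ → Finset (Fin k → ℕ) := fun N => Fintype.piFinset fun _ => Finset.range N with hbox
  have hmono : Monotone box := fun N N' h =>
    Fintype.piFinset_subset _ _ fun i => Finset.range_subset_range.2 h
  have hcof : ∀ t : Fin k → ℕ, ∃ N, t ∈ box N := by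
    intro t
    refine ⟨(Finset.univ.sup t) + 1, ?_⟩
    simp only [hbox, Fintype.mem_piFinset, Finset.mem_range]
    intro i
    exact Nat.lt_succ_of_le (Finset.le_sup (Finset.mem_univ i))
  have htop : Tendsto box atTop atTop := Filter.tendsto_atTop_finset_of_monotone hmono hcof
  have h1 : Tendsto (fun N => ∑ t ∈ box N, M fun i => f i (t i)) atTop
      (𝓝 (∑' t : Fin k → ℕ, M fun i => f i (t i))) := hS.hasSum.comp htop
  have h2 : Tendsto (fun N => ∑ t ∈ box N, M fun i => f i (t i)) atTop
      (𝓝 (M fun i => ∑' j, f i j)) := by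
    have heq : ∀ N, ∑ t ∈ box N, M (fun i => f i (t i)) =
        M fun i => ∑ j ∈ Finset.range N, f i j :=
      fun N => (M.map_sum_finset _ _).symm
    rw [show (fun N => ∑ t ∈ box N, M fun i => f i (t i)) =
      fun N => M fun i => ∑ j ∈ Finset.range N, f i j from funext heq]
    refine (M.cont.tendsto _).comp ?_
    rw [tendsto_pi_nhds]
    exact fun i => (hf i).hasSum.tendsto_sum_nat
  have := tendsto_nhds_unique h1 h2
  exact this ▸ hS.hasSum


lemma regroup {V : Type*} [NormedAddCommGroup V] [CompleteSpace V] {k : ℕ} (c : (Fin k → ℕ) → V) {S : V}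
    (h : HasSum c S) :
    HasSum (fun p : ℕ => ∑ t ∈ Finset.Nat.antidiagonalTuple k p, c t) S := by
  have hfib := h.tsum_fiberwise fun t => ∑ i, t i
  refine hfib.congr_fun fun p => ?_
  have hset : (fun t : Fin k → ℕ => ∑ i, t i) ⁻¹' {p} =
      ↑(Finset.Nat.antidiagonalTuple k p) := by
    ext t
    simp [Finset.Nat.mem_antidiagonalTuple]
  rw [hset, Finset.tsum_subtype']


section adiagLemmas

variable {V : Type*} [NormedAddCommGroup V] [NormedSpace ℝ V]
  (A : (n : ℕ) → MultilinearMap ℝ (fun _ : Fin (n + 1) => V) V)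

lemma adiag_zero (hA0 : ∀ v : Fin 1 → V, A 0 v = v 0) (x y : V) : adiag A 0 x y = y := by
  rw [adiag, hA0]
  simp [Fin.snoc]

lemma adiag_smul_left (n : ℕ) (s : ℝ) (x w : V) :
    adiag A n (s • x) w = s ^ n • adiag A n x w := by
  have h1 : (fun i => (Fin.snoc (fun _ => s) (1 : ℝ) : Fin (n + 1) → ℝ) i •
        (Fin.snoc (fun _ => x) w : Fin (n + 1) → V) i) =
      (Fin.snoc (fun _ => s • x) w : Fin (n + 1) → V) := by
    funext i
    refine Fin.lastCases ?_ (fun j => ?_) i <;> simp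
  have h := (A n).map_smul_univ (Fin.snoc (fun _ => s) 1) (Fin.snoc (fun _ => x) w)
  rw [h1] at h
  have h2 : (∏ i, (Fin.snoc (fun _ => s) (1 : ℝ) : Fin (n + 1) → ℝ) i) = s ^ n := by
    rw [Fin.prod_univ_castSucc]
    simp
  rw [adiag, adiag, h, h2]

lemma adiag_add_right (n : ℕ) (x w w' : V) :
    adiag A n x (w + w') = adiag A n x w + adiag A n x w' := by
  classical
  have h1 : (Fin.snoc (fun _ => x) (w + w') : Fin (n + 1) → V)
      = Function.update (Fin.snoc (fun _ => x) w) (Fin.last n) (w + w') :=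
    (Fin.update_snoc_last _ _ _).symm
  simp only [adiag]
  rw [h1, (A n).map_update_add, Fin.update_snoc_last, Fin.update_snoc_last]

lemma adiag_smul_right (n : ℕ) (x : V) (c : ℝ) (w : V) :
    adiag A n x (c • w) = c • adiag A n x w := by
  classical
  have h1 : (Fin.snoc (fun _ => x) (c • w) : Fin (n + 1) → V)
      = Function.update (Fin.snoc (fun _ => x) w) (Fin.last n) (c • w) :=
    (Fin.update_snoc_last _ _ _).symm
  simp only [adiag]
  rw [h1, (A n).map_update_smul, Fin.update_snoc_last]

end adiagLemmas

/-- Let `(A_{n,1})` be multilinear maps, symmetric in the first `n` arguments, with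
`A_{0,1}(x,y) = y`, such that `x ▷ y := y + Σ_{n ≥ 1} A_{n,1}(x,…,x,y)` converges. Then
`▷` is left self-distributive iff for all `p, q ≥ 1`,
`A_{p,1}(x, A_{q,1}(y,z)) = Σ_{s₁+⋯+s_q+k=p} A_{q,1}(A_{s₁,1}(x,y),…,A_{s_q,1}(x,y), A_{k,1}(x,z))`. -/
theorem stmt_6 {V : Type*} [NormedAddCommGroup V] [NormedSpace ℝ V] [FiniteDimensional ℝ V]
    (A : (n : ℕ) → MultilinearMap ℝ (fun _ : Fin (n + 1) => V) V)
    (hA0 : ∀ v : Fin 1 → V, A 0 v = v 0)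
    (hsymm : ∀ (n : ℕ) (x : Fin n → V) (y : V) (σ : Equiv.Perm (Fin n)),
      A n (Fin.snoc (x ∘ σ) y) = A n (Fin.snoc x y))
    (hconv : ∀ x y : V, Summable fun n => adiag A (n + 1) x y)
    (op : V → V → V)
    (hop : ∀ x y : V, op x y = y + ∑' n : ℕ, adiag A (n + 1) x y) :
    (∀ x y z : V, op x (op y z) = op (op x y) (op x z)) ↔
      (∀ p q : ℕ, 1 ≤ p → 1 ≤ q → ∀ x y z : V,
        adiag A p x (adiag A q y z) =
          ∑ t ∈ Finset.Nat.antidiagonalTuple (q + 1) p,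
            A q (Fin.snoc (fun i : Fin q => adiag A (t i.castSucc) x y)
              (adiag A (t (Fin.last q)) x z))) := by
    classical
  have hsum0 : ∀ x w : V, Summable fun n => adiag A n x w := fun x w =>
    (summable_nat_add_iff 1).1 (hconv x w)
  have hasSum_op : ∀ x w : V, HasSum (fun n => adiag A n x w) (op x w) := by
    intro x w
    have h := (hsum0 x w).hasSum
    rwa [Summable.tsum_eq_zero_add (hsum0 x w), adiag_zero A hA0, ← hop x w] at h
  have hasSum_op_smul : ∀ (s : ℝ) (x w : V),
      HasSum (fun n => s ^ n • adiag A n x w) (op (s • x) w) :=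
    fun s x w => (hasSum_op (s • x) w).congr_fun fun n => (adiag_smul_left A n s x w).symm
  have hopadd : ∀ x w w' : V, op x (w + w') = op x w + op x w' := by
    intro x w w'
    rw [hop x (w + w'), hop x w, hop x w',
      show (fun n => adiag A (n + 1) x (w + w')) =
        fun n => adiag A (n + 1) x w + adiag A (n + 1) x w' from
        funext fun n => adiag_add_right A (n + 1) x w w',
      Summable.tsum_add (hconv x w) (hconv x w')]
    abel
  have hopsmul : ∀ (x : V) (c : ℝ) (w : V), op x (c • w) = c • op x w := by
    intro x c w
    rw [hop x (c • w), hop x w,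
      show (fun n => adiag A (n + 1) x (c • w)) = fun n => c • adiag A (n + 1) x w from
        funext fun n => adiag_smul_right A (n + 1) x c w,
      Summable.tsum_const_smul c (hconv x w), smul_add]
  let opL : V → V →L[ℝ] V := fun x => LinearMap.toContinuousLinearMap
    { toFun := op x, map_add' := hopadd x, map_smul' := hopsmul x }
  have hopL : ∀ x w, opL x w = op x w := fun x w => rfl
  have expand : ∀ (k : ℕ) (x y z : V),
      HasSum (fun p : ℕ => ∑ t ∈ Finset.Nat.antidiagonalTuple (k + 1) p,
          A k (Fin.snoc (fun i : Fin k => adiag A (t i.castSucc) x y)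
            (adiag A (t (Fin.last k)) x z)))
        (adiag A k (op x y) (op x z)) := by
    intro k x y z
    set M : ContinuousMultilinearMap ℝ (fun _ : Fin (k + 1) => V) V :=
      { toMultilinearMap := A k, cont := mlCont (A k) } with hM
    set f : Fin (k + 1) → ℕ → V :=
      Fin.snoc (fun _ j => adiag A j x y) (fun j => adiag A j x z) with hfdef
    have hfs : ∀ i, Summable (f i) := by
      intro i
      refine Fin.lastCases ?_ (fun j => ?_) i
      · rw [hfdef, Fin.snoc_last]; exact hsum0 x z
      · rw [hfdef, Fin.snoc_castSucc]; exact hsum0 x y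
    have h1 := mlHasSum M f hfs
    have h2 : (fun i => ∑' j, f i j) =
        (Fin.snoc (fun _ : Fin k => op x y) (op x z) : Fin (k + 1) → V) := by
      funext i
      refine Fin.lastCases ?_ (fun j => ?_) i
      · rw [hfdef]; simp only [Fin.snoc_last]; exact (hasSum_op x z).tsum_eq
      · rw [hfdef]; simp only [Fin.snoc_castSucc]; exact (hasSum_op x y).tsum_eq
    rw [h2] at h1
    have h3 : (fun t : Fin (k + 1) → ℕ => M fun i => f i (t i)) =
        fun t => A k (Fin.snoc (fun i : Fin k => adiag A (t i.castSucc) x y)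
          (adiag A (t (Fin.last k)) x z)) := by
      funext t
      show A k _ = A k _
      congr 1
      funext i
      refine Fin.lastCases ?_ (fun j => ?_) i
      · rw [hfdef]; simp
      · rw [hfdef]; simp
    rw [h3] at h1
    have h4 : M (Fin.snoc (fun _ : Fin k => op x y) (op x z)) =
        adiag A k (op x y) (op x z) := rfl
    rw [h4] at h1
    exact regroup _ h1
  have expand_smul : ∀ (k : ℕ) (s : ℝ) (x y z : V),
      HasSum (fun p : ℕ => s ^ p • ∑ t ∈ Finset.Nat.antidiagonalTuple (k + 1) p,
          A k (Fin.snoc (fun i : Fin k => adiag A (t i.castSucc) x y)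
            (adiag A (t (Fin.last k)) x z)))
        (adiag A k (op (s • x) y) (op (s • x) z)) := by
    intro k s x y z
    refine (expand k (s • x) y z).congr_fun fun p => ?_
    rw [Finset.smul_sum]
    refine Finset.sum_congr rfl fun t ht => ?_
    have hts : (∑ i, t i) = p := (Finset.Nat.mem_antidiagonalTuple).1 ht
    have h1 : (Fin.snoc (fun i : Fin k => adiag A (t i.castSucc) (s • x) y)
          (adiag A (t (Fin.last k)) (s • x) z) : Fin (k + 1) → V)
        = fun i => s ^ t i • (Fin.snoc (fun i : Fin k => adiag A (t i.castSucc) x y)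
            (adiag A (t (Fin.last k)) x z) : Fin (k + 1) → V) i := by
      funext i
      refine Fin.lastCases ?_ (fun j => ?_) i
      · simp [adiag_smul_left A]
      · simp [adiag_smul_left A]
    show s ^ p • A k _ = A k _
    rw [h1, (A k).map_smul_univ, Finset.prod_pow_eq_pow_sum, hts]
  constructor
  · -- self-distributivity implies the coefficient identities
    intro hP p q hp hq x y z
    obtain ⟨q', rfl⟩ : ∃ q'', q = q'' + 1 := ⟨q - 1, by omega⟩
    have star : ∀ (x y z : V) (k : ℕ),
        op x (adiag A k y z) = adiag A k (op x y) (op x z) := by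
      intro x y z k
      have key : (fun n => op x (adiag A n y z)) =
          fun n => adiag A n (op x y) (op x z) := by
        apply psExt
        · intro t
          refine ((hasSum_op (t • y) z).mapL (opL x)).summable.congr fun n => ?_
          rw [adiag_smul_left, map_smul, hopL]
        · intro t
          exact (hasSum_op_smul t (op x y) (op x z)).summable
        · intro t
          have h1 : HasSum (fun n => t ^ n • op x (adiag A n y z))
              (op x (op (t • y) z)) := by
            have h := (hasSum_op (t • y) z).mapL (opL x)
            simp only [hopL] at h
            refine h.congr_fun fun n => ?_
            rw [adiag_smul_left, hopsmul]
          have h2 : HasSum (fun n => t ^ n • adiag A n (op x y) (op x z))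
              (op (t • op x y) (op x z)) := hasSum_op_smul t (op x y) (op x z)
          rw [h1.tsum_eq, h2.tsum_eq, ← hopsmul x t y]
          exact hP x (t • y) z
      exact congrFun key k
    have key2 : (fun n => adiag A n x (adiag A (q' + 1) y z)) =
        fun n => ∑ t ∈ Finset.Nat.antidiagonalTuple (q' + 1 + 1) n,
          A (q' + 1) (Fin.snoc (fun i : Fin (q' + 1) => adiag A (t i.castSucc) x y)
            (adiag A (t (Fin.last (q' + 1))) x z)) := by
      apply psExt
      · intro s
        exact (hasSum_op_smul s x (adiag A (q' + 1) y z)).summable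
      · intro s
        exact (expand_smul (q' + 1) s x y z).summable
      · intro s
        rw [(hasSum_op_smul s x (adiag A (q' + 1) y z)).tsum_eq,
          (expand_smul (q' + 1) s x y z).tsum_eq]
        exact star (s • x) y z (q' + 1)
    exact congrFun key2 p
  · -- the coefficient identities imply self-distributivity
    intro hQ x y z
    have star : ∀ (x y z : V) (k : ℕ),
        op x (adiag A (k + 1) y z) = adiag A (k + 1) (op x y) (op x z) := by
      intro x y z k
      have h1 := expand (k + 1) x y z
      have h2 : ∀ p : ℕ, adiag A p x (adiag A (k + 1) y z) =
          (∑ t ∈ Finset.Nat.antidiagonalTuple (k + 1 + 1) p,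
          A (k + 1) (Fin.snoc (fun i : Fin (k + 1) => adiag A (t i.castSucc) x y)
            (adiag A (t (Fin.last (k + 1))) x z))) := by
        intro p
        cases p with
        | zero =>
          rw [Finset.Nat.antidiagonalTuple_zero_right, Finset.sum_singleton,
            adiag_zero A hA0]
          show A (k + 1) _ = A (k + 1) _
          congr 1
          funext i
          refine Fin.lastCases ?_ (fun j => ?_) i
          · simp [adiag_zero A hA0]
          · simp [adiag_zero A hA0]
        | succ p =>
          exact hQ (p + 1) (k + 1) (by omega) (by omega) x y z
      have h3 : HasSum (fun p => adiag A p x (adiag A (k + 1) y z))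
          (adiag A (k + 1) (op x y) (op x z)) := h1.congr_fun h2
      exact (hasSum_op x (adiag A (k + 1) y z)).unique h3
    have e1 : op x (op y z) = op x z + ∑' n : ℕ, op x (adiag A (n + 1) y z) := by
      calc op x (op y z) = opL x (op y z) := (hopL _ _).symm
        _ = opL x z + ∑' n : ℕ, opL x (adiag A (n + 1) y z) := by
            rw [hop y z, map_add, (opL x).map_tsum (hconv y z)]
        _ = op x z + ∑' n : ℕ, op x (adiag A (n + 1) y z) := by
            rw [hopL]
            exact congrArg _ (tsum_congr fun n => hopL _ _)
    have e2 : op (op x y) (op x z) =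
        op x z + ∑' n : ℕ, adiag A (n + 1) (op x y) (op x z) := hop _ _
    rw [e1, e2]
    congr 1
    exact tsum_congr fun n => star x y z n
end

section
/- If (A_{n,1}) defines an analytic linear Lie rack structure on V with associated Leibniz bracket [x,y] = A_{1,1}(x,y), then each A_{q,1} is invariant: [x, A_{q,1}(y_1,...,y_{q+1})] = Σ_{i=1}^{q+1} A_{q,1}(y_1,...,[x,y_i],...,y_{q+1}) for all x, y_1,...,y_{q+1}. -/
namespace Rack8

section PowerSeries
variable {V : Type*} [NormedAddCommGroup V] [NormedSpace ℝ V]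

/-- Formal power series over ℝ from a coefficient sequence. -/
noncomputable def fs (a : ℕ → V) : FormalMultilinearSeries ℝ ℝ V :=
  fun n => ContinuousMultilinearMap.mkPiRing ℝ (Fin n) (a n)

lemma fs_apply (a : ℕ → V) (n : ℕ) (t : ℝ) : fs a n (fun _ => t) = t ^ n • a n := by
  simp [fs]

lemma fs_coeff (a : ℕ → V) (n : ℕ) : (fs a).coeff n = a n := by
  simp [FormalMultilinearSeries.coeff, fs]

lemma fs_radius (a : ℕ → V) (h : ∀ t : ℝ, Summable fun n => t ^ n • a n) :
    (fs a).radius = ⊤ := by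
  apply ENNReal.eq_top_of_forall_nnreal_le
  intro r
  apply FormalMultilinearSeries.le_radius_of_tendsto (l := 0)
  have := (h r).tendsto_atTop_zero.norm
  simp only [norm_zero] at this ⊢
  convert this using 2 with n
  simp [fs, ContinuousMultilinearMap.norm_mkPiRing, norm_smul,
    abs_of_nonneg (pow_nonneg r.coe_nonneg n), mul_comm]

lemma hasFPS (a : ℕ → V) (h : ∀ t : ℝ, Summable fun n => t ^ n • a n) :
    HasFPowerSeriesOnBall (fun t : ℝ => ∑' n, t ^ n • a n) (fs a) 0 ⊤ := by
  refine ⟨by rw [fs_radius a h], ENNReal.zero_lt_top, fun {y} _ => ?_⟩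
  simpa [fs_coeff] using (h y).hasSum

lemma analyticAt (a : ℕ → V) (h : ∀ t : ℝ, Summable fun n => t ^ n • a n) :
    AnalyticAt ℝ (fun t : ℝ => ∑' n, t ^ n • a n) 0 :=
  (hasFPS a h).hasFPowerSeriesAt.analyticAt

lemma tsum_at_zero (a : ℕ → V) : ∑' n, (0 : ℝ) ^ n • a n = a 0 := by
  rw [tsum_eq_single 0 (fun n hn => by simp [zero_pow hn])]
  simp

lemma ext_coeff (a b : ℕ → V) (ha : ∀ t : ℝ, Summable fun n => t ^ n • a n)
    (hb : ∀ t : ℝ, Summable fun n => t ^ n • b n)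
    (heq : ∀ t : ℝ, ∑' n, t ^ n • a n = ∑' n, t ^ n • b n) : a = b := by
  have h1 := (hasFPS a ha).hasFPowerSeriesAt
  have h2 : HasFPowerSeriesAt (fun t : ℝ => ∑' n, t ^ n • a n) (fs b) 0 :=
    (hasFPS b hb).hasFPowerSeriesAt.congr
      (Filter.Eventually.of_forall fun t => (heq t).symm)
  have hfs : fs a = fs b := h1.eq_formalMultilinearSeries h2
  funext n
  have := congrArg (fun p : FormalMultilinearSeries ℝ ℝ V => p.coeff n) hfs
  simpa [fs_coeff] using this

end PowerSeries

section Continuity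
variable {V W : Type*} [NormedAddCommGroup V] [NormedSpace ℝ V]
  [NormedAddCommGroup W] [NormedSpace ℝ W] [FiniteDimensional ℝ V]

lemma multilinear_continuous :
    ∀ (n : ℕ) (f : MultilinearMap ℝ (fun _ : Fin n => V) W), Continuous f := by
  intro n
  induction n with
  | zero =>
    intro f
    have : ⇑f = fun _ : Fin 0 → V => f 0 := by
      funext m; exact congrArg f (Subsingleton.elim m 0)
    rw [this]; exact continuous_const
  | succ n ih =>
    intro f
    classical
    set b := Module.Basis.ofVectorSpace ℝ V with hb
    have key : ∀ m : Fin (n + 1) → V,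
        f m = ∑ j : Module.Basis.ofVectorSpaceIndex ℝ V,
          (b.coord j) (m 0) • (f.curryLeft (b j)) (Fin.tail m) := by
      intro m
      conv_lhs => rw [← Fin.cons_self_tail m, ← MultilinearMap.curryLeft_apply,
        ← b.sum_repr (m 0)]
      rw [map_sum, MultilinearMap.sum_apply]
      refine Finset.sum_congr rfl fun j _ => ?_
      rw [map_smul, MultilinearMap.smul_apply]
      rfl
    have : Continuous fun m : Fin (n + 1) → V =>
        ∑ j : Module.Basis.ofVectorSpaceIndex ℝ V,
          (b.coord j) (m 0) • (f.curryLeft (b j)) (Fin.tail m) := by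
      refine continuous_finset_sum _ fun j _ => Continuous.smul ?_ ?_
      · exact (b.coord j).continuous_of_finiteDimensional.comp (continuous_apply 0)
      · exact (ih (f.curryLeft (b j))).comp
          (continuous_pi fun i => continuous_apply i.succ)
    have hf : ⇑f = fun m : Fin (n + 1) → V =>
        ∑ j : Module.Basis.ofVectorSpaceIndex ℝ V,
          (b.coord j) (m 0) • (f.curryLeft (b j)) (Fin.tail m) := funext key
    rw [hf]; exact this

/-- Bundle a multilinear map on a finite-dimensional space as a continuous multilinear map. -/
noncomputable def bundle {n : ℕ} (f : MultilinearMap ℝ (fun _ : Fin n => V) W) :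
    ContinuousMultilinearMap ℝ (fun _ : Fin n => V) W :=
  ⟨f, multilinear_continuous n f⟩

@[simp] lemma bundle_apply {n : ℕ} (f : MultilinearMap ℝ (fun _ : Fin n => V) W)
    (m : Fin n → V) : bundle f m = f m := rfl

end Continuity

section Polarization
open Finset
variable {V : Type*} [NormedAddCommGroup V] [NormedSpace ℝ V]

lemma polarization {q : ℕ} (D : MultilinearMap ℝ (fun _ : Fin q => V) V)
    (hsym : ∀ (σ : Equiv.Perm (Fin q)) (w : Fin q → V), D (w ∘ σ) = D w)
    (hdiag : ∀ y : V, D (fun _ => y) = 0) (w : Fin q → V) : D w = 0 := by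
  classical
  -- coefficient computation
  have coeff : ∀ r : Fin q → Fin q,
      (∑ S ∈ univ.powerset.filter (fun S : Finset (Fin q) => ∀ i, r i ∈ S),
        (-1 : ℤ) ^ (q - S.card))
      = if Function.Surjective r then 1 else 0 := by
    intro r
    have hbij : ∑ S ∈ univ.powerset.filter (fun S : Finset (Fin q) => ∀ i, r i ∈ S),
        (-1 : ℤ) ^ (q - S.card)
        = ∑ T ∈ (Finset.image r univ)ᶜ.powerset, (-1 : ℤ) ^ T.card := by
      refine Finset.sum_nbij' (fun S => Sᶜ) (fun T => Tᶜ) ?_ ?_ ?_ ?_ ?_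
      · intro S hS
        simp only [mem_filter, mem_powerset] at hS
        simp only [mem_powerset]
        intro a ha
        simp only [Finset.mem_compl] at ha ⊢
        intro hmem
        rcases Finset.mem_image.1 hmem with ⟨i, _, rfl⟩
        exact ha (hS.2 i)
      · intro T hT
        simp only [mem_powerset] at hT
        simp only [mem_filter, mem_powerset]
        refine ⟨subset_univ _, fun i => ?_⟩
        simp only [Finset.mem_compl]
        intro hmem
        exact (Finset.mem_compl.1 (hT hmem)) (Finset.mem_image_of_mem r (mem_univ i))
      · intro S _; simp
      · intro T _; simp
      · intro S hS
        simp only [mem_filter, mem_powerset] at hS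
        rw [Finset.card_compl]
        simp [Fintype.card_fin]
    rw [hbij, Finset.sum_powerset_neg_one_pow_card]
    have him : (Finset.image r univ)ᶜ = ∅ ↔ Function.Surjective r := by
      rw [Finset.compl_eq_empty_iff]
      constructor
      · intro h y
        have : y ∈ Finset.image r univ := by rw [h]; exact mem_univ y
        rcases Finset.mem_image.1 this with ⟨i, _, hi⟩
        exact ⟨i, hi⟩
      · intro h
        apply Finset.eq_univ_of_forall
        intro y
        rcases h y with ⟨i, hi⟩
        exact Finset.mem_image.2 ⟨i, mem_univ i, hi⟩
    by_cases hs : Function.Surjective r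
    · rw [if_pos (him.2 hs), if_pos hs]
    · rw [if_neg (fun h => hs (him.1 h)), if_neg hs]
  -- main computation
  have main : (0 : V) = (q.factorial) • D w := by
    have lhs0 : ∑ S ∈ univ.powerset, (-1 : ℤ) ^ (q - S.card) • D (fun _ => ∑ j ∈ S, w j)
        = 0 := by
      refine Finset.sum_eq_zero fun S _ => ?_
      rw [hdiag, smul_zero]
    rw [← lhs0]
    have expand : ∀ S : Finset (Fin q),
        D (fun _ : Fin q => ∑ j ∈ S, w j)
          = ∑ r ∈ Fintype.piFinset (fun _ : Fin q => S), D (fun i => w (r i)) := by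
      intro S
      exact D.map_sum_finset (fun _ j => w j) (fun _ => S)
    calc ∑ S ∈ univ.powerset, (-1 : ℤ) ^ (q - S.card) • D (fun _ => ∑ j ∈ S, w j)
        = ∑ S ∈ univ.powerset, ∑ r ∈ (univ : Finset (Fin q → Fin q)),
            (if r ∈ Fintype.piFinset (fun _ : Fin q => S) then
              (-1 : ℤ) ^ (q - S.card) • D (fun i => w (r i)) else 0) := by
          refine Finset.sum_congr rfl fun S _ => ?_
          rw [expand S, Finset.smul_sum, Finset.sum_ite_mem, Finset.univ_inter]
      _ = ∑ r ∈ (univ : Finset (Fin q → Fin q)), ∑ S ∈ univ.powerset,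
            (if r ∈ Fintype.piFinset (fun _ : Fin q => S) then
              (-1 : ℤ) ^ (q - S.card) • D (fun i => w (r i)) else 0) :=
          Finset.sum_comm
      _ = ∑ r ∈ (univ : Finset (Fin q → Fin q)),
            (if Function.Surjective r then (1 : ℤ) else 0) • D (fun i => w (r i)) := by
          refine Finset.sum_congr rfl fun r _ => ?_
          rw [← coeff r, Finset.sum_smul]
          rw [Finset.sum_filter]
          refine Finset.sum_congr rfl fun S _ => ?_
          simp only [Fintype.mem_piFinset]
      _ = ∑ r ∈ (univ : Finset (Fin q → Fin q)).filter Function.Surjective,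
            D (fun i => w (r i)) := by
          rw [Finset.sum_filter]
          refine Finset.sum_congr rfl fun r _ => ?_
          split_ifs <;> simp
      _ = ∑ σ ∈ (univ : Finset (Equiv.Perm (Fin q))), D (w ∘ σ) := by
          refine (Finset.sum_nbij' (fun r => if h : Function.Surjective r then
              Equiv.ofBijective r ((Finite.surjective_iff_bijective).1 h) else 1)
            (fun σ => ⇑σ) ?_ ?_ ?_ ?_ ?_).symm.symm
          · intro r hr; exact mem_univ _
          · intro σ _
            simp only [mem_filter, mem_univ, true_and]
            exact σ.surjective
          · intro r hr
            simp only [mem_filter, mem_univ, true_and] at hr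
            simp only [dif_pos hr]
            rfl
          · intro σ _
            have hs : Function.Surjective ⇑σ := σ.surjective
            simp only [dif_pos hs]
            ext i
            rfl
          · intro r hr
            simp only [mem_filter, mem_univ, true_and] at hr
            simp only [dif_pos hr]
            rfl
      _ = (q.factorial) • D w := by
          rw [Finset.sum_congr rfl (fun σ _ => hsym σ w)]
          rw [Finset.sum_const, Finset.card_univ, Fintype.card_perm, Fintype.card_fin]
  have h0 : ((q.factorial : ℝ)) • D w = 0 := by
    rw [Nat.cast_smul_eq_nsmul]
    exact main.symm
  have hfac : (q.factorial : ℝ) ≠ 0 := Nat.cast_ne_zero.2 q.factorial_ne_zero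
  exact (smul_eq_zero.1 h0).resolve_left hfac

end Polarization

section Main
variable {V : Type*} [NormedAddCommGroup V] [NormedSpace ℝ V]
variable (A : (n : ℕ) → MultilinearMap ℝ (fun _ : Fin (n + 1) => V) V)

lemma adiag_smul_left (n : ℕ) (t : ℝ) (x y : V) :
    adiag A n (t • x) y = t ^ n • adiag A n x y := by
  unfold adiag
  have h1 : (Fin.snoc (fun _ : Fin n => t • x) y : Fin (n + 1) → V)
      = fun i => (Fin.snoc (fun _ : Fin n => t) 1 : Fin (n + 1) → ℝ) i •
          (Fin.snoc (fun _ : Fin n => x) y : Fin (n + 1) → V) i := by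
    funext i
    refine Fin.lastCases ?_ ?_ i
    · simp
    · intro j; simp
  rw [h1, MultilinearMap.map_smul_univ]
  congr 1
  rw [Fin.prod_snoc]
  simp

lemma adiag_zero_left (k : ℕ) (u : V) : adiag A (k + 1) (0 : V) u = 0 :=
  (A (k + 1)).map_coord_zero (0 : Fin (k + 2)) (by
    rw [show (0 : Fin (k + 2)) = Fin.castSucc 0 from rfl, Fin.snoc_castSucc])

variable (hconv : ∀ x y : V, Summable fun n => adiag A (n + 1) x y)
variable (op : V → V → V)
variable (hop : ∀ x y : V, op x y = y + ∑' n : ℕ, adiag A (n + 1) x y)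

/-- `op x` as a linear map in its second argument. -/
noncomputable def opL (x : V) : V →ₗ[ℝ] V where
  toFun := op x
  map_add' y z := by
    rw [hop, hop, hop]
    have h1 : (fun n => adiag A (n + 1) x (y + z))
        = fun n => adiag A (n + 1) x y + adiag A (n + 1) x z :=
      funext fun n => (A (n + 1)).snoc_add _ _ _
    rw [h1, Summable.tsum_add (hconv x y) (hconv x z)]
    abel
  map_smul' c y := by
    show op x (c • y) = c • op x y
    rw [hop, hop]
    have h1 : (fun n => adiag A (n + 1) x (c • y))
        = fun n => c • adiag A (n + 1) x y :=
      funext fun n => (A (n + 1)).snoc_smul _ _ _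
    rw [h1, Summable.tsum_const_smul c (hconv x y), smul_add]

variable [FiniteDimensional ℝ V]
variable (hdist : ∀ x y z : V, op x (op y z) = op (op x y) (op x z))

include hconv hop hdist in
lemma starA : ∀ (n : ℕ) (x y z : V),
    op x (adiag A (n + 1) y z) = adiag A (n + 1) (op x y) (op x z) := by
  intro n x y z
  classical
  set e : V →L[ℝ] V := LinearMap.toContinuousLinearMap (opL A hconv op hop x) with he
  have ecoe : ∀ w, e w = op x w := fun w => rfl
  set a : ℕ → V := fun k => Nat.casesOn k (op x z)
    (fun m => op x (adiag A (m + 1) y z)) with ha'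
  set b : ℕ → V := fun k => Nat.casesOn k (op x z)
    (fun m => adiag A (m + 1) (op x y) (op x z)) with hb'
  have ha : ∀ t : ℝ, Summable fun k => t ^ k • a k := by
    intro t
    have h1 : ∀ k, t ^ (k + 1) • a (k + 1) = e (adiag A (k + 1) (t • y) z) := by
      intro k
      show t ^ (k + 1) • op x (adiag A (k + 1) y z) = _
      rw [adiag_smul_left, map_smul, ecoe]
    have tail : Summable fun k => t ^ (k + 1) • a (k + 1) := by
      rw [funext h1]
      exact (hconv (t • y) z).map e.toLinearMap e.continuous
    exact (summable_nat_add_iff 1).1 tail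
  have hb : ∀ t : ℝ, Summable fun k => t ^ k • b k := by
    intro t
    have h1 : ∀ k, t ^ (k + 1) • b (k + 1)
        = adiag A (k + 1) (t • op x y) (op x z) := by
      intro k
      show t ^ (k + 1) • adiag A (k + 1) (op x y) (op x z) = _
      rw [adiag_smul_left]
    have tail : Summable fun k => t ^ (k + 1) • b (k + 1) := by
      rw [funext h1]
      exact hconv (t • op x y) (op x z)
    exact (summable_nat_add_iff 1).1 tail
  have htsA : ∀ t : ℝ, (∑' k, t ^ k • a k) = op x (op (t • y) z) := by
    intro t
    rw [Summable.tsum_eq_zero_add (ha t)]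
    have h2 : op x (op (t • y) z)
        = e z + ∑' k, e (adiag A (k + 1) (t • y) z) := by
      rw [← ecoe, hop (t • y) z, map_add, e.map_tsum (hconv (t • y) z)]
    rw [h2]
    congr 1
    · show t ^ 0 • a 0 = e z
      rw [pow_zero, one_smul, ecoe]
      rfl
    · refine tsum_congr fun k => ?_
      show t ^ (k + 1) • op x (adiag A (k + 1) y z) = _
      rw [adiag_smul_left, map_smul, ecoe]
  have htsB : ∀ t : ℝ, (∑' k, t ^ k • b k) = op (op x (t • y)) (op x z) := by
    intro t
    rw [Summable.tsum_eq_zero_add (hb t)]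
    have hsm : op x (t • y) = t • op x y := by
      rw [← ecoe, ← ecoe, map_smul]
    rw [hsm, hop (t • op x y) (op x z)]
    congr 1
    · show t ^ 0 • b 0 = op x z
      rw [pow_zero, one_smul]
      rfl
    · refine tsum_congr fun k => ?_
      show t ^ (k + 1) • adiag A (k + 1) (op x y) (op x z) = _
      rw [adiag_smul_left]
  have heq : ∀ t : ℝ, (∑' k, t ^ k • a k) = ∑' k, t ^ k • b k := fun t =>
    (htsA t).trans ((hdist x (t • y) z).trans (htsB t).symm)
  have hab := ext_coeff a b ha hb heq
  exact congrFun hab (n + 1)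

include hconv hop hdist in
lemma diagInv : ∀ (n : ℕ) (x y z : V),
    adiag A 1 x (adiag A (n + 1) y z)
      = ∑ i : Fin (n + 2), A (n + 1) (Function.update
          (Fin.snoc (fun _ : Fin (n + 1) => y) z) i
          ((Fin.snoc (fun _ : Fin (n + 1) => adiag A 1 x y) (adiag A 1 x z)
            : Fin (n + 2) → V) i)) := by
  intro n x y z
  classical
  have hsum : ∀ (u : V) (t : ℝ), Summable fun k => t ^ k • adiag A (k + 1) x u := by
    intro u t
    rcases eq_or_ne t 0 with rfl | ht
    · apply summable_of_ne_finset_zero (s := {0})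
      intro k hk
      simp only [Finset.mem_singleton] at hk
      simp [zero_pow hk]
    · have h1 : Summable fun k => adiag A (k + 1) (t • x) u := hconv (t • x) u
      have h2 : (fun k => t ^ k • adiag A (k + 1) x u)
          = fun k => t⁻¹ • adiag A (k + 1) (t • x) u := by
        funext k
        rw [adiag_smul_left, smul_smul, pow_succ', ← mul_assoc, inv_mul_cancel₀ ht, one_mul]
      rw [h2]
      exact h1.const_smul _
  have hcurve : ∀ u : V, HasDerivAt (fun t : ℝ => op (t • x) u) (adiag A 1 x u) 0 := by
    intro u
    have hfun : (fun t : ℝ => op (t • x) u)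
        = fun t => u + t • ∑' k, t ^ k • adiag A (k + 1) x u := by
      funext t
      rw [hop]
      congr 1
      have h1 : (fun k => adiag A (k + 1) (t • x) u)
          = fun k => t • (t ^ k • adiag A (k + 1) x u) := by
        funext k
        rw [adiag_smul_left, smul_smul, pow_succ']
      rw [h1, Summable.tsum_const_smul t (hsum u t)]
    rw [hfun]
    have hg : AnalyticAt ℝ (fun t : ℝ => ∑' k, t ^ k • adiag A (k + 1) x u) 0 :=
      analyticAt _ (hsum u)
    have hg0 : (∑' k, (0 : ℝ) ^ k • adiag A (k + 1) x u) = adiag A 1 x u :=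
      tsum_at_zero _
    have hd := hg.differentiableAt.hasDerivAt
    have h := ((hasDerivAt_id (0 : ℝ)).smul hd).const_add u
    convert h using 1 <;>
    simp [hg0]
  set m := n + 1 with hm
  set C := bundle (A m) with hC
  set γ : ℝ → (Fin (m + 1) → V) :=
    fun t => Fin.snoc (fun _ : Fin m => op (t • x) y) (op (t • x) z) with hγdef
  have hγ : HasDerivAt γ
      (Fin.snoc (fun _ : Fin m => adiag A 1 x y) (adiag A 1 x z)) 0 := by
    rw [hasDerivAt_pi]
    intro i
    refine Fin.lastCases ?_ ?_ i
    · simpa [hγdef, Fin.snoc_last] using hcurve z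
    · intro j; simpa [hγdef, Fin.snoc_castSucc] using hcurve y
  have hRHS := (C.hasFDerivAt (γ 0)).comp_hasDerivAt 0 hγ
  have hfun2 : (fun t : ℝ => op (t • x) (adiag A m y z)) = fun t => C (γ t) := by
    funext t
    have := starA A hconv op hop hdist n (t • x) y z
    simpa [hγdef, hC, adiag] using this
  have hLHS := hcurve (adiag A m y z)
  rw [hfun2] at hLHS
  have huniq := hLHS.unique hRHS
  have hop0 : ∀ u : V, op (0 : V) u = u := by
    intro u
    rw [hop]
    have h1 : (fun k => adiag A (k + 1) (0 : V) u) = fun _ => (0 : V) :=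
      funext fun k => adiag_zero_left A k u
    rw [h1, tsum_zero, add_zero]
  have hγ0 : γ 0 = Fin.snoc (fun _ : Fin m => y) z := by
    funext i
    refine Fin.lastCases ?_ ?_ i
    · simp [hγdef, zero_smul, hop0]
    · intro j; simp [hγdef, zero_smul, hop0]
  rw [huniq, hγ0, ContinuousMultilinearMap.linearDeriv_apply]
  rfl

end Main
end Rack8

/-- If `(A_{n,1})` defines an analytic linear Lie rack structure on `V` with associated
Leibniz bracket `[x,y] = A_{1,1}(x,y)`, then every `A_{q,1}` (`q ≥ 1`) is invariant:
`[x, A_{q,1}(y₁,…,y_{q+1})] = Σ_i A_{q,1}(y₁,…,[x,y_i],…,y_{q+1})`. -/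
theorem stmt_8 {V : Type*} [NormedAddCommGroup V] [NormedSpace ℝ V] [FiniteDimensional ℝ V]
    (A : (n : ℕ) → MultilinearMap ℝ (fun _ : Fin (n + 1) => V) V)
    (hA0 : ∀ v : Fin 1 → V, A 0 v = v 0)
    (hsymm : ∀ (n : ℕ) (x : Fin n → V) (y : V) (σ : Equiv.Perm (Fin n)),
      A n (Fin.snoc (x ∘ σ) y) = A n (Fin.snoc x y))
    (hconv : ∀ x y : V, Summable fun n => adiag A (n + 1) x y)
    (op : V → V → V)
    (hop : ∀ x y : V, op x y = y + ∑' n : ℕ, adiag A (n + 1) x y)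
    (hdist : ∀ x y z : V, op x (op y z) = op (op x y) (op x z)) :
    ∀ (q : ℕ), 1 ≤ q → ∀ (x : V) (v : Fin (q + 1) → V),
      adiag A 1 x (A q v) =
        ∑ i : Fin (q + 1), A q (Function.update v i (adiag A 1 x (v i))) := by
  intro q hq x v
  classical
  obtain ⟨n, rfl⟩ : ∃ n, q = n + 1 := ⟨q - 1, by omega⟩
  suffices h : ∀ (w : Fin (n + 1) → V) (z : V),
      adiag A 1 x (A (n + 1) (Fin.snoc w z)) =
        ∑ i : Fin (n + 2), A (n + 1) (Function.update (Fin.snoc w z) i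
          (adiag A 1 x ((Fin.snoc w z : Fin (n + 2) → V) i))) by
    have hv := h (Fin.init v) (v (Fin.last (n + 1)))
    rwa [Fin.snoc_init_self v] at hv
  intro w0 z0
  -- the bracket with `x` as a linear map
  set br : V →ₗ[ℝ] V :=
    { toFun := fun u => adiag A 1 x u
      map_add' := fun u u' => (A 1).snoc_add _ _ _
      map_smul' := fun c u => (A 1).snoc_smul _ _ _ } with hbr
  -- fixing the last argument of `A (n+1)`
  set N : V → MultilinearMap ℝ (fun _ : Fin (n + 1) => V) V :=
    fun z => (LinearMap.applyₗ z).compMultilinearMap (A (n + 1)).curryRight with hN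
  have hNapp : ∀ (z : V) (w : Fin (n + 1) → V), N z w = A (n + 1) (Fin.snoc w z) :=
    fun z w => rfl
  -- the two multilinear maps to compare
  set M₁ : MultilinearMap ℝ (fun _ : Fin (n + 1) => V) V :=
    br.compMultilinearMap (N z0) with hM₁
  set M₂ : MultilinearMap ℝ (fun _ : Fin (n + 1) => V) V :=
    (∑ i : Fin (n + 1), (N z0).compLinearMap
      (fun j => if j = i then br else LinearMap.id)) + N (br z0) with hM₂
  have hM₂app : ∀ w : Fin (n + 1) → V, M₂ w
      = (∑ i : Fin (n + 1), A (n + 1) (Fin.snoc (Function.update w i (br (w i))) z0))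
        + A (n + 1) (Fin.snoc w (br z0)) := by
    intro w
    rw [hM₂]
    simp only [MultilinearMap.add_apply, MultilinearMap.sum_apply,
      MultilinearMap.compLinearMap_apply]
    congr 1
    refine Finset.sum_congr rfl fun i _ => ?_
    have harg : (fun j => (if j = i then br else LinearMap.id) (w j))
        = Function.update w i (br (w i)) := by
      funext j
      by_cases hji : j = i
      · subst hji; simp
      · simp [hji, Function.update_of_ne hji]
    rw [harg]
    exact hNapp _ _
  set D : MultilinearMap ℝ (fun _ : Fin (n + 1) => V) V := M₁ - M₂ with hD
  have hsymD : ∀ (σ : Equiv.Perm (Fin (n + 1))) (w : Fin (n + 1) → V),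
      D (w ∘ σ) = D w := by
    intro σ w
    have h1 : M₁ (w ∘ σ) = M₁ w := by
      rw [hM₁]
      simp only [LinearMap.compMultilinearMap_apply]
      rw [hNapp, hNapp, hsymm (n + 1) w z0 σ]
    have h2 : M₂ (w ∘ σ) = M₂ w := by
      rw [hM₂app, hM₂app]
      congr 1
      · have hterm : ∀ i : Fin (n + 1),
            A (n + 1) (Fin.snoc (Function.update (w ∘ σ) i (br ((w ∘ σ) i))) z0)
              = A (n + 1) (Fin.snoc (Function.update w (σ i) (br (w (σ i)))) z0) := by
          intro i
          have hcomp : Function.update (w ∘ σ) i (br ((w ∘ σ) i))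
              = (Function.update w (σ i) (br (w (σ i)))) ∘ σ := by
            funext j
            simp only [Function.comp_apply, Function.update_apply]
            have hiff : σ j = σ i ↔ j = i := σ.injective.eq_iff
            by_cases hji : j = i
            · subst hji; simp
            · rw [if_neg hji, if_neg (fun h => hji (hiff.1 h))]
          rw [hcomp, hsymm (n + 1) _ z0 σ]
        rw [Finset.sum_congr rfl fun i _ => hterm i]
        exact Equiv.sum_comp σ
          (fun j => A (n + 1) (Fin.snoc (Function.update w j (br (w j))) z0))
      · rw [hsymm (n + 1) w (br z0) σ]
    rw [hD]
    simp only [MultilinearMap.sub_apply, h1, h2]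
  have hdiagD : ∀ y : V, D (fun _ => y) = 0 := by
    intro y
    have hstep := Rack8.diagInv A hconv op hop hdist n x y z0
    rw [hD]
    simp only [MultilinearMap.sub_apply]
    rw [sub_eq_zero]
    have hL : M₁ (fun _ => y) = adiag A 1 x (adiag A (n + 1) y z0) := rfl
    rw [hL, hstep, hM₂app]
    rw [Fin.sum_univ_castSucc]
    congr 1
    · refine Finset.sum_congr rfl fun i _ => ?_
      rw [Fin.snoc_castSucc, ← Fin.snoc_update]
      rfl
    · rw [Fin.snoc_last, Fin.update_snoc_last]
      rfl
  have hpol := Rack8.polarization D hsymD hdiagD w0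
  have hMeq : M₁ w0 = M₂ w0 := by
    rw [hD] at hpol
    simpa [sub_eq_zero] using hpol
  have hLHS : adiag A 1 x (A (n + 1) (Fin.snoc w0 z0)) = M₁ w0 := rfl
  rw [hLHS, hMeq, hM₂app]
  conv_rhs => rw [Fin.sum_univ_castSucc]
  congr 1
  · refine Finset.sum_congr rfl fun i _ => ?_
    rw [Fin.snoc_castSucc, ← Fin.snoc_update]
    rfl
  · rw [Fin.snoc_last, Fin.update_snoc_last]
    rfl
end

section
/- Let h be a left Leibniz algebra, ⟨.,.⟩ a scalar product on h, a_j, b_j ∈ [h,h]^⊥ ∩ Z(h)^⊥, z_j ∈ Z(h), and f_j : ℝ → ℝ with f_j(0)=0 for j=1,...,k. Then x ▷ y := exp(ad_x)(y) + Σ_j ⟨y,b_j⟩ f_j(⟨x,a_j⟩) z_j satisfies the left self-distributivity x ▷ (y ▷ z) = (x ▷ y) ▷ (x ▷ z), defining a linear Lie rack operation pointed at 0. -/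
open Nat
set_option synthInstance.maxHeartbeats 1000000
set_option maxHeartbeats 1600000

section Aux2
variable {M : Type*} [NormedAddCommGroup M] [NormedSpace ℝ M] [CompleteSpace M]

private lemma aux_summable (T : M →L[ℝ] M) (v : M) :
    Summable fun n : ℕ => ((n ! : ℝ)⁻¹) • (T ^ n) v := by
  have := (NormedSpace.expSeries_summable' (𝕂 := ℝ) T).map
    (ContinuousLinearMap.apply ℝ M v) (ContinuousLinearMap.apply ℝ M v).continuous
  exact this

private lemma exp_applyv (T : M →L[ℝ] M) (v : M) :
    NormedSpace.exp T v = ∑' n : ℕ, ((n ! : ℝ)⁻¹) • (T ^ n) v := by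
  have h1 : NormedSpace.exp T = ∑' n : ℕ, ((n ! : ℝ)⁻¹) • T ^ n := by
    rw [NormedSpace.exp_eq_tsum ℝ]
  rw [h1]
  have := (ContinuousLinearMap.apply ℝ M v).map_tsum
    (NormedSpace.expSeries_summable' (𝕂 := ℝ) T)
  simpa using this

private lemma exp_fix (T : M →L[ℝ] M) (v : M) (hv : T v = 0) :
    NormedSpace.exp T v = v := by
  rw [exp_applyv, tsum_eq_single 0]
  · simp
  · intro n hn
    obtain ⟨m, rfl⟩ := Nat.exists_eq_succ_of_ne_zero hn
    rw [pow_succ, ContinuousLinearMap.mul_apply, hv, map_zero, smul_zero]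

end Aux2


section Der
variable {h : Type*} [NormedAddCommGroup h] [NormedSpace ℝ h] [FiniteDimensional ℝ h]

private lemma adOp_apply (b : h →ₗ[ℝ] h →ₗ[ℝ] h) (x y : h) : adOp b x y = b x y := by
  simp [adOp]

private lemma adOp_comm (b : h →ₗ[ℝ] h →ₗ[ℝ] h)
    (leibniz : ∀ u v w : h, b u (b v w) = b (b u v) w + b v (b u w)) (x y : h) :
    adOp b (b x y) = adOp b x * adOp b y - adOp b y * adOp b x := by
  ext w
  simp only [ContinuousLinearMap.sub_apply, ContinuousLinearMap.mul_apply, adOp_apply]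
  rw [leibniz x y w]; abel

private instance topRingF {h : Type*} [NormedAddCommGroup h] [NormedSpace ℝ h] :
    IsTopologicalRing ((h →L[ℝ] h) →L[ℝ] (h →L[ℝ] h)) where
  continuous_add := continuous_add
  continuous_neg := continuous_neg
  continuous_mul := (isBoundedBilinearMap_comp
      (𝕜 := ℝ) (E := h →L[ℝ] h) (F := h →L[ℝ] h) (G := h →L[ℝ] h)).continuous

private lemma adOp_exp (b : h →ₗ[ℝ] h →ₗ[ℝ] h)
    (leibniz : ∀ u v w : h, b u (b v w) = b (b u v) w + b v (b u w)) (x y : h) :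
    adOp b (NormedSpace.exp (adOp b x) y)
      = NormedSpace.exp (adOp b x) * adOp b y * NormedSpace.exp (-(adOp b x)) := by
  haveI : CompleteSpace h := FiniteDimensional.complete ℝ h
  let +nondep : NormedAlgebra ℚ ((h →L[ℝ] h) →L[ℝ] (h →L[ℝ] h)) := .restrictScalars ℚ ℝ _
  set a : h →L[ℝ] h := adOp b x with ha
  set L : (h →L[ℝ] h) →L[ℝ] (h →L[ℝ] h) := ContinuousLinearMap.mul ℝ (h →L[ℝ] h) a with hL
  set R : (h →L[ℝ] h) →L[ℝ] (h →L[ℝ] h) := (ContinuousLinearMap.mul ℝ (h →L[ℝ] h)).flip a with hR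
  have hLap : ∀ B : h →L[ℝ] h, L B = a * B := fun B => rfl
  have hRap : ∀ B : h →L[ℝ] h, R B = B * a := fun B => rfl
  have hDap : ∀ B : h →L[ℝ] h, (L - R) B = a * B - B * a := fun B => by
    rw [ContinuousLinearMap.sub_apply, hLap, hRap]
  let Aclm : h →L[ℝ] (h →L[ℝ] h) :=
    LinearMap.toContinuousLinearMap
      ((LinearMap.toContinuousLinearMap : (h →ₗ[ℝ] h) ≃ₗ[ℝ] (h →L[ℝ] h)).toLinearMap ∘ₗ b)
  have hAclm : ∀ v : h, Aclm v = adOp b v := fun v => by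
    simp [Aclm, adOp]
  have hpow : ∀ (n : ℕ) (w : h), adOp b ((a ^ n) w) = ((L - R) ^ n) (adOp b w) := by
    intro n
    induction n with
    | zero => intro w; simp
    | succ m ih =>
        intro w
        have h1 : (a ^ (m + 1)) w = (a ^ m) (a w) := by
          rw [pow_succ, ContinuousLinearMap.mul_apply]
        rw [h1, ih (a w)]
        have h2 : adOp b (a w) = (L - R) (adOp b w) := by
          rw [hDap]
          have hxw : a w = b x w := adOp_apply b x w
          rw [hxw, adOp_comm b leibniz x w, ha]
        rw [h2, ← ContinuousLinearMap.mul_apply ((L - R) ^ m) (L - R), ← pow_succ]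
  have hmain : adOp b (NormedSpace.exp a y)
      = ∑' n : ℕ, ((n ! : ℝ)⁻¹) • ((L - R) ^ n) (adOp b y) := by
    have e1 : adOp b (NormedSpace.exp a y) = Aclm (NormedSpace.exp a y) := (hAclm _).symm
    rw [e1, exp_applyv a y, Aclm.map_tsum (aux_summable a y)]
    congr 1; funext n
    rw [map_smul, hAclm, hpow]
  rw [hmain, ← exp_applyv (L - R) (adOp b y)]
  have hLR : L * R = R * L := by
    ext B
    simp only [ContinuousLinearMap.mul_apply, hLap, hRap, mul_assoc]
  have hcomm' : Commute L (-R) := by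
    show L * (-R) = (-R) * L
    ext B
    simp only [ContinuousLinearMap.mul_apply, ContinuousLinearMap.neg_apply, hLap, hRap,
      neg_mul, mul_neg, mul_assoc]
  rw [sub_eq_add_neg, NormedSpace.exp_add_of_commute hcomm', ContinuousLinearMap.mul_apply]
  have hexpR : ∀ B : h →L[ℝ] h, NormedSpace.exp (-R) B = B * NormedSpace.exp (-a) := by
    intro B
    have hRn : ∀ (n : ℕ) (B : h →L[ℝ] h), ((-R) ^ n) B = B * (-a) ^ n := by
      intro n
      induction n with
      | zero => intro B; simp
      | succ m ih =>
          intro B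
          have hstep : ((-R) ^ (m + 1)) B = ((-R) ^ m) (-(B * a)) := by
            rw [pow_succ, ContinuousLinearMap.mul_apply, ContinuousLinearMap.neg_apply, hRap]
          rw [hstep, ih (-(B * a))]
          have hc : a * (-a) ^ m = (-a) ^ m * a := ((Commute.refl a).neg_right.pow_right m).eq
          rw [pow_succ, mul_neg, mul_neg, neg_mul, mul_assoc, hc, ← mul_assoc]
    rw [exp_applyv]
    have hcg : ∀ n : ℕ, ((n ! : ℝ)⁻¹) • ((-R) ^ n) B = B * (((n ! : ℝ)⁻¹) • (-a) ^ n) := by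
      intro n; rw [hRn, mul_smul_comm]
    rw [tsum_congr hcg, (NormedSpace.expSeries_summable' (𝕂 := ℝ) (-a)).tsum_mul_left B,
      NormedSpace.exp_eq_tsum ℝ]
  have hexpL : ∀ B : h →L[ℝ] h, NormedSpace.exp L B = NormedSpace.exp a * B := by
    intro B
    have hLn : ∀ (n : ℕ) (B : h →L[ℝ] h), (L ^ n) B = a ^ n * B := by
      intro n
      induction n with
      | zero => intro B; simp
      | succ m ih =>
          intro B
          have hstep : (L ^ (m + 1)) B = (L ^ m) (a * B) := by
            rw [pow_succ, ContinuousLinearMap.mul_apply, hLap]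
          rw [hstep, ih (a * B), ← mul_assoc, ← pow_succ]
    rw [exp_applyv]
    have hcg : ∀ n : ℕ, ((n ! : ℝ)⁻¹) • (L ^ n) B = (((n ! : ℝ)⁻¹) • a ^ n) * B := by
      intro n; rw [hLn, smul_mul_assoc]
    rw [tsum_congr hcg, (NormedSpace.expSeries_summable' (𝕂 := ℝ) a).tsum_mul_right B,
      NormedSpace.exp_eq_tsum ℝ]
  rw [hexpR, hexpL, mul_assoc]

private lemma exp_conj (b : h →ₗ[ℝ] h →ₗ[ℝ] h)
    (leibniz : ∀ u v w : h, b u (b v w) = b (b u v) w + b v (b u w)) (x y z : h) :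
    NormedSpace.exp (adOp b (NormedSpace.exp (adOp b x) y))
      (NormedSpace.exp (adOp b x) z)
      = NormedSpace.exp (adOp b x) (NormedSpace.exp (adOp b y) z) := by
  haveI : CompleteSpace h := FiniteDimensional.complete ℝ h
  let +nondep : NormedAlgebra ℚ (h →L[ℝ] h) := .restrictScalars ℚ ℝ _
  set a : h →L[ℝ] h := adOp b x with ha
  have h1 : NormedSpace.exp (-a) * NormedSpace.exp a = 1 := by
    rw [← NormedSpace.exp_add_of_commute ((Commute.refl a).neg_left), neg_add_cancel,
      NormedSpace.exp_zero]
  have h2 : NormedSpace.exp a * NormedSpace.exp (-a) = 1 := by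
    rw [← NormedSpace.exp_add_of_commute ((Commute.refl a).neg_right), add_neg_cancel,
      NormedSpace.exp_zero]
  let u : (h →L[ℝ] h)ˣ := ⟨NormedSpace.exp a, NormedSpace.exp (-a), h2, h1⟩
  have hconj : NormedSpace.exp (adOp b (NormedSpace.exp a y))
      = NormedSpace.exp a * NormedSpace.exp (adOp b y) * NormedSpace.exp (-a) := by
    rw [adOp_exp b leibniz x y]
    exact NormedSpace.exp_units_conj u (adOp b y)
  rw [hconj, ContinuousLinearMap.mul_apply, ContinuousLinearMap.mul_apply]
  have h3 : NormedSpace.exp (-a) (NormedSpace.exp a z) = z := by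
    rw [← ContinuousLinearMap.mul_apply, h1, ContinuousLinearMap.one_apply]
  rw [h3]

end Der


/-- Let `h` be a left Leibniz algebra with a scalar product, `aⱼ, bⱼ ∈ [h,h]^⊥ ∩ Z(h)^⊥`,
`zⱼ ∈ Z(h)`, and `fⱼ : ℝ → ℝ` with `fⱼ(0) = 0`. Then
`x ▷ y := exp (ad_x) y + Σⱼ ⟨y,bⱼ⟩ fⱼ(⟨x,aⱼ⟩) zⱼ` is left self-distributive and pointed
at `0`, hence a linear Lie rack operation. -/
theorem stmt_14 {h : Type*} [NormedAddCommGroup h] [InnerProductSpace ℝ h]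
    [FiniteDimensional ℝ h]
    (b : h →ₗ[ℝ] h →ₗ[ℝ] h)
    (leibniz : ∀ u v w : h, b u (b v w) = b (b u v) w + b v (b u w))
    (k : ℕ) (av bv zv : Fin k → h) (f : Fin k → ℝ → ℝ)
    (hzv : ∀ (j : Fin k) (x : h), b (zv j) x = 0 ∧ b x (zv j) = 0)
    (hav : ∀ j : Fin k, (∀ x y : h, (inner ℝ (b x y) (av j) : ℝ) = 0) ∧
      (∀ z : h, (∀ x : h, b z x = 0 ∧ b x z = 0) → (inner ℝ z (av j) : ℝ) = 0))
    (hbv : ∀ j : Fin k, (∀ x y : h, (inner ℝ (b x y) (bv j) : ℝ) = 0) ∧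
      (∀ z : h, (∀ x : h, b z x = 0 ∧ b x z = 0) → (inner ℝ z (bv j) : ℝ) = 0))
    (hf : ∀ j : Fin k, f j 0 = 0)
    (op : h → h → h)
    (hop : ∀ x y : h, op x y = (NormedSpace.expSeries ℝ (h →L[ℝ] h)).sum (adOp b x) y +
      ∑ j : Fin k, ((inner ℝ y (bv j) : ℝ) * f j (inner ℝ x (av j) : ℝ)) • zv j) :
    (∀ x y z : h, op x (op y z) = op (op x y) (op x z)) ∧
      (∀ x : h, op x 0 = 0) ∧ (∀ y : h, op 0 y = y) := by
  haveI : CompleteSpace h := FiniteDimensional.complete ℝ h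
  replace hop : ∀ x y : h, op x y = NormedSpace.exp (adOp b x) y +
      ∑ j : Fin k, ((inner ℝ y (bv j) : ℝ) * f j (inner ℝ x (av j) : ℝ)) • zv j := by
    intro x y; rw [hop, NormedSpace.exp_eq_expSeries_sum ℝ]
  set S : h → h → h := fun x y =>
    ∑ j : Fin k, ((inner ℝ y (bv j) : ℝ) * f j (inner ℝ x (av j) : ℝ)) • zv j with hS
  have hz1 : ∀ j : Fin k, b (zv j) = 0 := fun j => LinearMap.ext fun w => (hzv j w).1
  have hs_b1 : ∀ x y : h, b (S x y) = 0 := by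
    intro x y
    simp only [hS, map_sum, map_smul, hz1, smul_zero]
    exact Finset.sum_const_zero
  have hs_b2 : ∀ x y w : h, b w (S x y) = 0 := by
    intro x y w
    simp only [hS, map_sum, map_smul]
    refine Finset.sum_eq_zero fun j _ => ?_
    rw [(hzv j w).2, smul_zero]
  have hs_inner : ∀ (x y v : h),
      (∀ z : h, (∀ w : h, b z w = 0 ∧ b w z = 0) → (inner ℝ z v : ℝ) = 0) →
      (inner ℝ (S x y) v : ℝ) = 0 := by
    intro x y v hv
    rw [hS]
    rw [sum_inner]
    refine Finset.sum_eq_zero fun j _ => ?_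
    rw [real_inner_smul_left, hv (zv j) (fun w => hzv j w), mul_zero]
  have hexp_inner : ∀ (x y v : h), (∀ p q : h, (inner ℝ (b p q) v : ℝ) = 0) →
      (inner ℝ (NormedSpace.exp (adOp b x) y) v : ℝ) = (inner ℝ y v : ℝ) := by
    intro x y v hv
    set a : h →L[ℝ] h := adOp b x with ha
    rw [exp_applyv]
    have hmap := (innerSL ℝ v).map_tsum (aux_summable a y)
    have hmap' : (inner ℝ v (∑' n : ℕ, ((n ! : ℝ)⁻¹) • (a ^ n) y) : ℝ)
        = ∑' n : ℕ, ((n ! : ℝ)⁻¹) * (inner ℝ v ((a ^ n) y) : ℝ) := by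
      simpa using hmap
    rw [real_inner_comm, hmap', tsum_eq_single 0]
    · simp [real_inner_comm]
    · intro n hn
      obtain ⟨m, rfl⟩ := Nat.exists_eq_succ_of_ne_zero hn
      have e : a ^ (m + 1) = a * a ^ m := (pow_succ a m).trans ((Commute.refl a).pow_left m).eq
      have e2 : (a ^ (m + 1)) y = b x ((a ^ m) y) := by
        rw [e, ContinuousLinearMap.mul_apply, ha, adOp_apply]
      have e3 : (inner ℝ v ((a ^ (m + 1)) y) : ℝ) = 0 := by
        rw [e2, real_inner_comm]
        exact hv x ((a ^ m) y)
      rw [e3, mul_zero]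
  have hexp_fix : ∀ (x c : h), b x c = 0 → NormedSpace.exp (adOp b x) c = c := by
    intro x c hc
    exact exp_fix (adOp b x) c (by rw [adOp_apply, hc])
  have hadd : ∀ (u x y : h), adOp b (u + S x y) = adOp b u := by
    intro u x y
    unfold adOp
    congr 1
    rw [map_add, hs_b1, add_zero]
  refine ⟨?_, ?_, ?_⟩
  · intro x y z
    rw [hop y z, hop x, hop x y, hop x z, hop]
    -- LHS simplification
    have l1 : NormedSpace.exp (adOp b x) (NormedSpace.exp (adOp b y) z + S y z)
        = NormedSpace.exp (adOp b x) (NormedSpace.exp (adOp b y) z) + S y z := by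
      rw [map_add, hexp_fix x (S y z) (hs_b2 y z x)]
    have l2 : ∀ j : Fin k,
        (inner ℝ (NormedSpace.exp (adOp b y) z + S y z) (bv j) : ℝ) = (inner ℝ z (bv j) : ℝ) := by
      intro j
      rw [inner_add_left, hexp_inner y z (bv j) (hbv j).1, hs_inner y z (bv j) (hbv j).2,
        add_zero]
    -- RHS simplification
    have r0 : adOp b (NormedSpace.exp (adOp b x) y + S x y)
        = adOp b (NormedSpace.exp (adOp b x) y) := hadd _ x y
    have r1 : NormedSpace.exp (adOp b (NormedSpace.exp (adOp b x) y + S x y))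
        (NormedSpace.exp (adOp b x) z + S x z)
        = NormedSpace.exp (adOp b x) (NormedSpace.exp (adOp b y) z) + S x z := by
      rw [r0, map_add, exp_conj b leibniz x y z,
        hexp_fix (NormedSpace.exp (adOp b x) y) (S x z)
          (hs_b2 x z (NormedSpace.exp (adOp b x) y))]
    have r2 : ∀ j : Fin k,
        (inner ℝ (NormedSpace.exp (adOp b x) z + S x z) (bv j) : ℝ)
          = (inner ℝ z (bv j) : ℝ) := by
      intro j
      rw [inner_add_left, hexp_inner x z (bv j) (hbv j).1, hs_inner x z (bv j) (hbv j).2,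
        add_zero]
    have r3 : ∀ j : Fin k,
        (inner ℝ (NormedSpace.exp (adOp b x) y + S x y) (av j) : ℝ)
          = (inner ℝ y (av j) : ℝ) := by
      intro j
      rw [inner_add_left, hexp_inner x y (av j) (hav j).1, hs_inner x y (av j) (hav j).2,
        add_zero]
    rw [l1, r1]
    have l3 : (∑ j : Fin k, ((inner ℝ (NormedSpace.exp (adOp b y) z + S y z) (bv j) : ℝ)
        * f j (inner ℝ x (av j) : ℝ)) • zv j) = S x z := by
      rw [hS]
      exact Finset.sum_congr rfl fun j _ => by rw [l2 j]
    have r4 : (∑ j : Fin k, ((inner ℝ (NormedSpace.exp (adOp b x) z + S x z) (bv j) : ℝ)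
        * f j (inner ℝ (NormedSpace.exp (adOp b x) y + S x y) (av j) : ℝ)) • zv j) = S y z := by
      rw [hS]
      exact Finset.sum_congr rfl fun j _ => by rw [r2 j, r3 j]
    rw [l3, r4]
    abel
  · intro x
    rw [hop]
    have : ∀ j : Fin k, ((inner ℝ (0 : h) (bv j) : ℝ) * f j (inner ℝ x (av j) : ℝ)) • zv j = 0 := by
      intro j
      rw [inner_zero_left, zero_mul, zero_smul]
    rw [map_zero, Finset.sum_congr rfl fun j _ => this j, Finset.sum_const_zero, add_zero]
  · intro y
    rw [hop]
    have h0 : adOp b (0 : h) = 0 := by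
      unfold adOp
      rw [map_zero, map_zero]
    have : ∀ j : Fin k, ((inner ℝ y (bv j) : ℝ) * f j (inner ℝ (0 : h) (av j) : ℝ)) • zv j = 0 := by
      intro j
      rw [inner_zero_left, hf j, mul_zero, zero_smul]
    rw [h0, NormedSpace.exp_zero, ContinuousLinearMap.one_apply,
      Finset.sum_congr rfl fun j _ => this j, Finset.sum_const_zero, add_zero]
end

section
/- Define C_{2n+1} and C_{2n} by the recursion expressing an analytic linear Lie rack on sl₂(ℝ): if A_{r,1}(x,y) = C_r · ad_x^r(y)/r! with C_0 = C_1 = 1, C_2 = 1, then self-distributivity at orders (p=2n, q=1) forces (C_{2n}/(2n)!) = (1/2)[Σ_{r=0}^{n−1} C_{2r+1}C_{2(n−r)−1}/((2r+1)!(2(n−r)−1)!) − Σ_{r=1}^{n−1} C_{2r}C_{2(n−r)}/((2r)!(2(n−r))!)]. Equivalently, setting U_r = C_r/r!, one has U_{2n} = (1/2)[Σ_{r=0}^{n−1} U_{2r+1}U_{2(n−r)−1} − Σ_{r=1}^{n−1} U_{2r}U_{2(n−r)}] for all n ≥ 1. -/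
open LieAlgebra

private noncomputable def Hm : SpecialLinear.sl (Fin 2) ℝ :=
  ⟨!![1,0;0,-1], show _ ∈ LinearMap.ker (Matrix.traceLinearMap (Fin 2) ℝ ℝ) from
    LinearMap.mem_ker.2 (by simp [Matrix.trace_fin_two])⟩
private noncomputable def Em : SpecialLinear.sl (Fin 2) ℝ :=
  ⟨!![0,1;0,0], show _ ∈ LinearMap.ker (Matrix.traceLinearMap (Fin 2) ℝ ℝ) from
    LinearMap.mem_ker.2 (by simp [Matrix.trace_fin_two])⟩
private noncomputable def Fm : SpecialLinear.sl (Fin 2) ℝ :=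
  ⟨!![0,0;1,0], show _ ∈ LinearMap.ker (Matrix.traceLinearMap (Fin 2) ℝ ℝ) from
    LinearMap.mem_ker.2 (by simp [Matrix.trace_fin_two])⟩

private lemma brHE : ⁅Hm, Em⁆ = (2:ℝ) • Em := by
  apply Subtype.ext
  rw [Submodule.coe_smul]
  show ⁅(Hm : Matrix (Fin 2) (Fin 2) ℝ), (Em : Matrix (Fin 2) (Fin 2) ℝ)⁆ = _
  simp only [Hm, Em, Ring.lie_def]
  ext i j; fin_cases i <;> fin_cases j <;>
    (simp [Matrix.mul_apply, Fin.sum_univ_two]; try norm_num)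

private lemma brHF : ⁅Hm, Fm⁆ = (-2:ℝ) • Fm := by
  apply Subtype.ext
  rw [Submodule.coe_smul]
  show ⁅(Hm : Matrix (Fin 2) (Fin 2) ℝ), (Fm : Matrix (Fin 2) (Fin 2) ℝ)⁆ = _
  simp only [Hm, Fm, Ring.lie_def]
  ext i j; fin_cases i <;> fin_cases j <;>
    (simp [Matrix.mul_apply, Fin.sum_univ_two]; try norm_num)

private lemma brEF : ⁅Em, Fm⁆ = Hm := by
  apply Subtype.ext
  show ⁅(Em : Matrix (Fin 2) (Fin 2) ℝ), (Fm : Matrix (Fin 2) (Fin 2) ℝ)⁆ = _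
  simp only [Em, Fm, Hm, Ring.lie_def]
  ext i j; fin_cases i <;> fin_cases j <;>
    (simp [Matrix.mul_apply, Fin.sum_univ_two]; try norm_num)

private lemma Hne : Hm ≠ 0 := by
  intro h
  have h2 := congrFun (congrFun (congrArg Subtype.val h) 0) 0
  simp [Hm] at h2

private lemma adpowE (k : ℕ) :
    ((ad ℝ (SpecialLinear.sl (Fin 2) ℝ) Hm) ^ k) Em = ((2:ℝ)^k) • Em := by
  induction k with
  | zero => simp
  | succ k ih =>
    rw [pow_succ', Module.End.mul_apply, ih, map_smul, ad_apply, brHE,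
      smul_smul, pow_succ]

private lemma adpowF (k : ℕ) :
    ((ad ℝ (SpecialLinear.sl (Fin 2) ℝ) Hm) ^ k) Fm = ((-2:ℝ)^k) • Fm := by
  induction k with
  | zero => simp
  | succ k ih =>
    rw [pow_succ', Module.End.mul_apply, ih, map_smul, ad_apply, brHF,
      smul_smul, pow_succ]

private lemma adpowH (k : ℕ) (hk : 1 ≤ k) :
    ((ad ℝ (SpecialLinear.sl (Fin 2) ℝ) Hm) ^ k) Hm = 0 := by
  obtain ⟨j, rfl⟩ : ∃ j, k = j + 1 := ⟨k - 1, by omega⟩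
  rw [pow_succ, Module.End.mul_apply, ad_apply, lie_self, map_zero]

private lemma altsum (b : ℕ → ℝ) (m : ℕ) :
    ∑ k ∈ Finset.range (2*m+1), (-1:ℝ)^k * b k
      = (∑ r ∈ Finset.range (m+1), b (2*r)) - ∑ r ∈ Finset.range m, b (2*r+1) := by
  induction m with
  | zero => simp
  | succ m ih =>
    have h : 2*(m+1)+1 = (2*m+1) + 1 + 1 := by ring
    rw [h, Finset.sum_range_succ, Finset.sum_range_succ, ih,
      Finset.sum_range_succ (fun r => b (2*r)) (m+1),
      Finset.sum_range_succ (fun r => b (2*r+1)) m]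
    have hA : (-1:ℝ)^(2*m+1) = -1 := Odd.neg_one_pow ⟨m, by omega⟩
    have hB : (-1:ℝ)^(2*m+1+1) = 1 := Even.neg_one_pow ⟨m+1, by omega⟩
    have hI : 2*(m+1) = 2*m+1+1 := by ring
    rw [hA, hB, hI]; ring

/-- Suppose `A_{r,1}(x,y) = C_r · ad_x^r(y)/r!` (i.e. `A_{r,1}(x,y) = U_r • ad_x^r(y)` with
`U_r = C_r/r!`) defines an analytic linear Lie rack on `sl₂(ℝ)`, with
`U_0 = U_1 = 1`, `U_2 = 1/2`. The self-distributivity structure equations at orders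
`(p = 2n, q = 1)` force
`U_{2n} = (1/2)[Σ_{r=0}^{n−1} U_{2r+1} U_{2(n−r)−1} − Σ_{r=1}^{n−1} U_{2r} U_{2(n−r)}]`
for all `n ≥ 1`. -/
theorem stmt_19 (U : ℕ → ℝ) (hU0 : U 0 = 1) (hU1 : U 1 = 1) (hU2 : U 2 = 1 / 2)
    (heq : ∀ n : ℕ, 1 ≤ n → ∀ x y z : SpecialLinear.sl (Fin 2) ℝ,
      U (2 * n) • ((ad ℝ _ x) ^ (2 * n)) ⁅y, z⁆ =
        ∑ k ∈ Finset.range (2 * n + 1),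
          ⁅U k • ((ad ℝ _ x) ^ k) y, U (2 * n - k) • ((ad ℝ _ x) ^ (2 * n - k)) z⁆) :
    ∀ n : ℕ, 1 ≤ n →
      U (2 * n) = (1 / 2) *
        ((∑ r ∈ Finset.range n, U (2 * r + 1) * U (2 * (n - r) - 1)) -
          ∑ r ∈ Finset.Ico 1 n, U (2 * r) * U (2 * (n - r))) := by
  intro n hn
  have key := heq n hn Hm Em Fm
  have hRHS : ∀ k ∈ Finset.range (2*n+1),
      ⁅U k • ((ad ℝ (SpecialLinear.sl (Fin 2) ℝ) Hm) ^ k) Em,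
        U (2*n - k) • ((ad ℝ (SpecialLinear.sl (Fin 2) ℝ) Hm) ^ (2*n - k)) Fm⁆
      = ((2:ℝ)^(2*n) * ((-1:ℝ)^k * (U k * U (2*n - k)))) • Hm := by
    intro k hk
    rw [Finset.mem_range] at hk
    rw [adpowE, adpowF, smul_smul, smul_smul, lie_smul, smul_lie, brEF, smul_smul]
    congr 1
    obtain ⟨j, hj, hjk⟩ : ∃ j, 2*n - k = j ∧ j + k = 2*n := ⟨_, rfl, by omega⟩
    rw [hj]
    have h1 : (-2:ℝ)^j = (-1:ℝ)^j * 2^j := by rw [neg_pow]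
    have h3 : (-1:ℝ)^j = (-1:ℝ)^k := by
      rcases Nat.even_or_odd k with ⟨t, ht⟩ | ⟨t, ht⟩
      · rw [Even.neg_one_pow ⟨n - t, by omega⟩, Even.neg_one_pow ⟨t, ht⟩]
      · rw [Odd.neg_one_pow ⟨n - t - 1, by omega⟩, Odd.neg_one_pow ⟨t, ht⟩]
    have h4 : (2:ℝ)^(2*n) = 2^k * 2^j := by rw [← pow_add]; congr 1; omega
    rw [h1, h3, h4]
    ring
  rw [Finset.sum_congr rfl hRHS, ← Finset.sum_smul, brEF,
    adpowH (2*n) (by omega), smul_zero] at key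
  have hsum : (∑ k ∈ Finset.range (2*n+1),
      (2:ℝ)^(2*n) * ((-1:ℝ)^k * (U k * U (2*n - k)))) = 0 := by
    rcases smul_eq_zero.mp key.symm with h | h
    · exact h
    · exact absurd h Hne
  rw [← Finset.mul_sum] at hsum
  have hpow : ((2:ℝ)^(2*n)) ≠ 0 := by positivity
  have hsum2 : ∑ k ∈ Finset.range (2*n+1), (-1:ℝ)^k * (U k * U (2*n - k)) = 0 :=
    (mul_eq_zero.mp hsum).resolve_left hpow
  rw [altsum (fun k => U k * U (2*n - k)) n] at hsum2
  have heven1 : ∑ r ∈ Finset.range (n+1), U (2*r) * U (2*n - 2*r)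
      = (∑ r ∈ Finset.range n, U (2*r) * U (2*n - 2*r)) + U (2*n) := by
    rw [Finset.sum_range_succ]
    congr 1
    simp [hU0]
  have heven2 : ∑ r ∈ Finset.range n, U (2*r) * U (2*n - 2*r)
      = U (2*n) + ∑ r ∈ Finset.Ico 1 n, U (2*r) * U (2*n - 2*r) := by
    rw [Finset.range_eq_Ico, Finset.sum_eq_sum_Ico_succ_bot hn]
    congr 1
    simp [hU0]
  have heven3 : ∑ r ∈ Finset.Ico 1 n, U (2*r) * U (2*n - 2*r)
      = ∑ r ∈ Finset.Ico 1 n, U (2*r) * U (2*(n-r)) := by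
    refine Finset.sum_congr rfl fun r hr => ?_
    rw [Finset.mem_Ico] at hr
    congr 2
    omega
  have hodd : ∑ r ∈ Finset.range n, U (2*r+1) * U (2*n - (2*r+1))
      = ∑ r ∈ Finset.range n, U (2*r+1) * U (2*(n-r)-1) := by
    refine Finset.sum_congr rfl fun r hr => ?_
    rw [Finset.mem_range] at hr
    congr 2
    omega
  rw [heven1, heven2, heven3, hodd] at hsum2
  linarith
end
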